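/- arXiv:2108.12895 — 6 statements merged into one kernel-verified Lean document; each statement's English description precedes it below -/
import Mathlib

section
/- Let V = ℚ[X] with basis (X^i)_{i≥0} and let σ₊(z): ⋀V → ⋀V⟦z⟧ be the unique Hasse–Schmidt derivation (i.e. σ₊(z)(u∧v) = σ₊(z)u ∧ σ₊(z)v) whose restriction to V satisfies σ₊(z)X^j = ∑_{i≥0} X^{j+i} z^i. Then for any formal variable t and any r ≥ 2, σ₊(t)(X^{r-1} ∧ X^{r-2} ∧ ⋯ ∧ X^0) = (σ₊(t)X^{r-1}) ∧ X^{r-2} ∧ ⋯ ∧ X^0. -/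
noncomputable section

/-- `V = ℚ[X]` as the free ℚ-module with basis `(X^i)_{i ≥ 0}`. -/
abbrev V : Type := ℕ →₀ ℚ

/-- The basis vector `X^i`, viewed inside the exterior algebra `⋀V`. -/
def Xp (i : ℕ) : ExteriorAlgebra ℚ V := ExteriorAlgebra.ι ℚ (Finsupp.single i 1)

/-- `X^r(0) = X^{r-1} ∧ X^{r-2} ∧ ⋯ ∧ X^0`. -/
def Wd (r : ℕ) : ExteriorAlgebra ℚ V := (((List.range r).reverse).map Xp).prod

lemma Xp_swap (a b : ℕ) : Xp a * Xp b + Xp b * Xp a = 0 :=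
  ExteriorAlgebra.ι_add_mul_swap (R := ℚ) (Finsupp.single a (1:ℚ)) (Finsupp.single b 1)

lemma symsum (a m : ℕ) :
    ∑ k ∈ Finset.range (m + 1), Xp (a + (m - k)) * Xp (a + k) = 0 := by
  set S := ∑ k ∈ Finset.range (m + 1), Xp (a + (m - k)) * Xp (a + k) with hS
  have h1 : S = ∑ k ∈ Finset.range (m + 1), Xp (a + k) * Xp (a + (m - k)) := by
    rw [hS, ← Finset.sum_range_reflect]
    apply Finset.sum_congr rfl
    intro k hk
    simp only [Finset.mem_range] at hk
    congr 2 <;> omega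
  have h2 : S + S = 0 := by
    nth_rewrite 2 [h1]
    rw [hS, ← Finset.sum_add_distrib]
    exact Finset.sum_eq_zero fun k _ => Xp_swap _ _
  have h3 : (2 : ℚ) • S = 0 := by rw [two_smul]; exact h2
  rcases smul_eq_zero.mp h3 with h | h
  · norm_num at h
  · exact h

lemma key (σ : ExteriorAlgebra ℚ V →+* PowerSeries (ExteriorAlgebra ℚ V))
    (hσ : ∀ j, σ (Xp j) = PowerSeries.mk fun i => Xp (j + i)) (s : ℕ) :
    σ (Xp (s + 1)) * σ (Xp s) = σ (Xp (s + 1)) * PowerSeries.C (Xp s) := by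
  ext n
  rw [PowerSeries.coeff_mul, PowerSeries.coeff_mul_C, hσ, hσ]
  simp only [PowerSeries.coeff_mk]
  rw [Finset.Nat.sum_antidiagonal_eq_sum_range_succ (f := fun i j => Xp (s + 1 + i) * Xp (s + j))]
  rcases Nat.eq_zero_or_pos n with rfl | hn
  · simp
  · obtain ⟨m, rfl⟩ : ∃ m, n = m + 1 := ⟨n - 1, by omega⟩
    rw [Nat.succ_eq_add_one, Finset.sum_range_succ]
    have h0 : ∑ k ∈ Finset.range (m + 1), Xp (s + 1 + k) * Xp (s + (m + 1 - k)) = 0 := by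
      rw [← Finset.sum_range_reflect]
      calc ∑ k ∈ Finset.range (m + 1), Xp (s + 1 + (m + 1 - 1 - k)) * Xp (s + (m + 1 - (m + 1 - 1 - k)))
          = ∑ k ∈ Finset.range (m + 1), Xp ((s + 1) + (m - k)) * Xp ((s + 1) + k) := by
            apply Finset.sum_congr rfl
            intro k hk
            simp only [Finset.mem_range] at hk
            congr 2 <;> omega
        _ = 0 := symsum (s + 1) m
    rw [h0, zero_add]
    congr 2
    omega

lemma Wd_succ (r : ℕ) : Wd (r + 1) = Xp r * Wd r := by
  unfold Wd
  rw [List.range_succ, List.reverse_append]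
  simp

lemma main_aux (r : ℕ) (hr : 1 ≤ r)
    (σ : ExteriorAlgebra ℚ V →+* PowerSeries (ExteriorAlgebra ℚ V))
    (hσ : ∀ j, σ (Xp j) = PowerSeries.mk fun i => Xp (j + i)) :
    σ (Wd r) = σ (Xp (r - 1)) * PowerSeries.C (Wd (r - 1)) := by
  induction r with
  | zero => omega
  | succ n ih =>
    rcases Nat.eq_zero_or_pos n with rfl | hn
    · simp [Wd, List.range_succ]
    · obtain ⟨m, rfl⟩ : ∃ m, n = m + 1 := ⟨n - 1, by omega⟩
      rw [Wd_succ, map_mul, ih (by omega)]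
      have h1 : (m + 1 : ℕ) - 1 = m := rfl
      have h2 : (m + 1 + 1 : ℕ) - 1 = m + 1 := rfl
      rw [h1, h2, ← mul_assoc, key σ hσ m, mul_assoc, ← map_mul, ← Wd_succ]

/-- If `σ₊(z)` is a Hasse–Schmidt derivation on `⋀V` (a multiplicative, i.e. ring-hom,
map into `(⋀V)⟦z⟧`) restricting to `V` by `σ₊(z)X^j = ∑_{i≥0} X^{j+i} z^i`, then for
all `r ≥ 2`, `σ₊(t)(X^{r-1} ∧ ⋯ ∧ X^0) = (σ₊(t)X^{r-1}) ∧ X^{r-2} ∧ ⋯ ∧ X^0`. -/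
theorem sigma_plus_wedge (r : ℕ) (hr : 2 ≤ r)
    (σ : ExteriorAlgebra ℚ V →+* PowerSeries (ExteriorAlgebra ℚ V))
    (hσ : ∀ j, σ (Xp j) = PowerSeries.mk fun i => Xp (j + i)) :
    σ (Wd r) = σ (Xp (r - 1)) * PowerSeries.C (Wd (r - 1)) := by
  exact main_aux r (by omega) σ hσ
end
end

section
/- With σ₊(t)X^j = ∑_{i≥0} X^{j+i}t^i and σ̄₊(t)X^j = X^j − tX^{j+1} extended as Hasse–Schmidt derivations to ⋀ℚ[X], the operators σ₊(t) and σ̄₊(t) are mutually inverse in End(⋀ℚ[X])⟦t⟧. -/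
noncomputable section

namespace SigmaSbarAux

open PowerSeries Finset

/-- Rearrangement of a double antidiagonal sum (Cauchy product reassociation). -/
lemma quad_swap {M : Type*} [AddCommMonoid M] (n : ℕ) (H : ℕ → ℕ → ℕ → ℕ → M) :
    (∑ p ∈ antidiagonal n, ∑ q ∈ antidiagonal p.2, ∑ r ∈ antidiagonal p.1,
        H q.1 q.2 r.1 r.2)
    = ∑ p ∈ antidiagonal n, ∑ q ∈ antidiagonal p.1, ∑ r ∈ antidiagonal p.2,
        H q.2 r.2 q.1 r.1 := by
  have h1 : (∑ x ∈ (antidiagonal n).sigma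
          (fun p => (antidiagonal p.2) ×ˢ (antidiagonal p.1)),
          H x.2.1.1 x.2.1.2 x.2.2.1 x.2.2.2)
      = ∑ p ∈ antidiagonal n, ∑ q ∈ antidiagonal p.2, ∑ r ∈ antidiagonal p.1,
        H q.1 q.2 r.1 r.2 := by
    rw [Finset.sum_sigma]
    exact Finset.sum_congr rfl fun p _ =>
      Finset.sum_product' _ _ (fun (q r : ℕ × ℕ) => H q.1 q.2 r.1 r.2)
  have h2 : (∑ x ∈ (antidiagonal n).sigma
          (fun p => (antidiagonal p.1) ×ˢ (antidiagonal p.2)),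
          H x.2.1.2 x.2.2.2 x.2.1.1 x.2.2.1)
      = ∑ p ∈ antidiagonal n, ∑ q ∈ antidiagonal p.1, ∑ r ∈ antidiagonal p.2,
        H q.2 r.2 q.1 r.1 := by
    rw [Finset.sum_sigma]
    exact Finset.sum_congr rfl fun p _ =>
      Finset.sum_product' _ _ (fun (q r : ℕ × ℕ) => H q.2 r.2 q.1 r.1)
  rw [← h1, ← h2]
  refine Finset.sum_nbij'
    (fun x => ⟨(x.2.2.1 + x.2.1.1, x.2.2.2 + x.2.1.2), ((x.2.2.1, x.2.1.1), (x.2.2.2, x.2.1.2))⟩)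
    (fun x => ⟨(x.2.1.1 + x.2.2.1, x.2.1.2 + x.2.2.2), ((x.2.1.2, x.2.2.2), (x.2.1.1, x.2.2.1))⟩)
    ?_ ?_ ?_ ?_ ?_
  · rintro ⟨⟨i, j⟩, ⟨⟨a, b⟩, ⟨c, d⟩⟩⟩ h
    simp only [Finset.mem_sigma, Finset.mem_product, Finset.HasAntidiagonal.mem_antidiagonal] at h ⊢
    obtain ⟨e1, e2, e3⟩ := h
    exact ⟨by omega, trivial, trivial⟩
  · rintro ⟨⟨m, k⟩, ⟨⟨c, a⟩, ⟨d, b⟩⟩⟩ h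
    simp only [Finset.mem_sigma, Finset.mem_product, Finset.HasAntidiagonal.mem_antidiagonal] at h ⊢
    obtain ⟨e1, e2, e3⟩ := h
    exact ⟨by omega, trivial, trivial⟩
  · rintro ⟨⟨i, j⟩, ⟨⟨a, b⟩, ⟨c, d⟩⟩⟩ h
    simp only [Finset.mem_sigma, Finset.mem_product, Finset.HasAntidiagonal.mem_antidiagonal] at h
    obtain ⟨e1, e2, e3⟩ := h
    subst e1 e2 e3
    rfl
  · rintro ⟨⟨m, k⟩, ⟨⟨c, a⟩, ⟨d, b⟩⟩⟩ h
    simp only [Finset.mem_sigma, Finset.mem_product, Finset.HasAntidiagonal.mem_antidiagonal] at h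
    obtain ⟨e1, e2, e3⟩ := h
    subst e1 e2 e3
    rfl
  · rintro ⟨⟨i, j⟩, ⟨⟨a, b⟩, ⟨c, d⟩⟩⟩ _
    rfl

variable {R : Type*} [Ring R]

/-- The coefficient-wise `t`-linear extension of `φ : R →+* R⟦t⟧` to `R⟦t⟧`. -/
noncomputable def Eext (φ : R →+* PowerSeries R) (f : PowerSeries R) : PowerSeries R :=
  PowerSeries.mk fun n => ∑ p ∈ antidiagonal n, coeff p.1 (φ (coeff p.2 f))

lemma coeff_Eext (φ : R →+* PowerSeries R) (f : PowerSeries R) (n : ℕ) :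
    coeff n (Eext φ f) = ∑ p ∈ antidiagonal n, coeff p.1 (φ (coeff p.2 f)) := by
  simp [Eext]

lemma Eext_mul (φ : R →+* PowerSeries R) (f g : PowerSeries R) :
    Eext φ (f * g) = Eext φ f * Eext φ g := by
  ext n
  rw [coeff_Eext, PowerSeries.coeff_mul]
  simp only [coeff_Eext, PowerSeries.coeff_mul, map_sum, map_mul, Finset.sum_mul_sum]
  exact quad_swap n fun a b c d => coeff c (φ (coeff a f)) * coeff d (φ (coeff b g))

lemma Eext_add (φ : R →+* PowerSeries R) (f g : PowerSeries R) :
    Eext φ (f + g) = Eext φ f + Eext φ g := by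
  ext n
  simp [coeff_Eext, Finset.sum_add_distrib]

lemma Eext_C (φ : R →+* PowerSeries R) (a : R) :
    Eext φ (PowerSeries.C a) = φ a := by
  ext n
  rw [coeff_Eext, Finset.Nat.sum_antidiagonal_eq_sum_range_succ_mk,
    Finset.sum_eq_single n]
  · simp
  · intro k hk hkn
    have h : n - k ≠ 0 := by
      simp only [Finset.mem_range] at hk
      omega
    simp [PowerSeries.coeff_C, h]
  · intro h
    simp at h

end SigmaSbarAux

open SigmaSbarAux PowerSeries Finset

/-- If `σ = σ₊(t)` and `τ = σ̄₊(t)` are the Hasse–Schmidt derivations on `⋀V`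
(multiplicative maps `⋀V → (⋀V)⟦t⟧`) with `σ₊(t)X^j = ∑_{i≥0} X^{j+i}t^i` and
`σ̄₊(t)X^j = X^j − t X^{j+1}`, then they are mutually inverse in `End(⋀V)⟦t⟧`:
for every `u` the coefficient of `t^n` in either composite series
`∑_{i+j=n} σ_i(τ_j u)` is `u` for `n = 0` and `0` for `n > 0`. -/
theorem sigma_sbar_mutually_inverse
    (σ τ : ExteriorAlgebra ℚ V →+* PowerSeries (ExteriorAlgebra ℚ V))
    (hσ : ∀ j, σ (Xp j) = PowerSeries.mk fun i => Xp (j + i))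
    (hτ : ∀ j, τ (Xp j) =
      PowerSeries.mk fun i => if i = 0 then Xp j else if i = 1 then -Xp (j + 1) else 0) :
    (∀ u : ExteriorAlgebra ℚ V, ∀ n : ℕ,
        ∑ p ∈ Finset.HasAntidiagonal.antidiagonal n,
          PowerSeries.coeff p.1 (σ (PowerSeries.coeff p.2 (τ u))) =
        if n = 0 then u else 0) ∧
    (∀ u : ExteriorAlgebra ℚ V, ∀ n : ℕ,
        ∑ p ∈ Finset.HasAntidiagonal.antidiagonal n,
          PowerSeries.coeff p.1 (τ (PowerSeries.coeff p.2 (σ u))) =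
        if n = 0 then u else 0) := by
  set A := ExteriorAlgebra ℚ V
  -- ring homs between ℚ-algebras preserve the rational algebra maps
  have halg : ∀ (φ : A →+* PowerSeries A) (r : ℚ),
      φ (algebraMap ℚ A r) = PowerSeries.C (algebraMap ℚ A r) := by
    intro φ r
    rw [RingHom.map_rat_algebraMap φ, PowerSeries.algebraMap_apply]
  -- base computation 1 : Eext σ (τ (Xp a)) = C (Xp a)
  have base1 : ∀ a : ℕ, Eext σ (τ (Xp a)) = PowerSeries.C (Xp a) := by
    intro a
    ext n
    rw [coeff_Eext, Finset.Nat.sum_antidiagonal_eq_sum_range_succ_mk, hτ]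
    rcases n with _ | m
    · simp [hσ]
    · have hstep : ∀ k ∈ Finset.range (m + 2),
          coeff k (σ (coeff (m + 1 - k)
            (PowerSeries.mk fun i => if i = 0 then Xp a else if i = 1 then -Xp (a + 1) else 0)))
          = (if k = m + 1 then Xp (a + (m + 1)) else 0)
            + (if k = m then -Xp (a + 1 + m) else 0) := by
        intro k hk
        simp only [Finset.mem_range] at hk
        rw [PowerSeries.coeff_mk]
        by_cases h1 : k = m + 1
        · have e0 : m + 1 - k = 0 := by omega
          subst h1
          simp [e0, hσ]
        · by_cases h2 : k = m
          · have e1 : m + 1 - k ≠ 0 := by omega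
            have e2 : m + 1 - k = 1 := by omega
            subst h2
            simp [e1, e2, hσ]
          · have e1 : m + 1 - k ≠ 0 := by omega
            have e2 : m + 1 - k ≠ 1 := by omega
            simp [e1, e2, h1, h2]
      rw [Finset.sum_congr rfl hstep, Finset.sum_add_distrib,
        Finset.sum_ite_eq' _ (m + 1) (fun _ => Xp (a + (m + 1))),
        Finset.sum_ite_eq' _ m (fun _ => -Xp (a + 1 + m))]
      have : a + (m + 1) = a + 1 + m := by omega
      simp [this]
  -- base computation 2 : Eext τ (σ (Xp a)) = C (Xp a)
  have base2 : ∀ a : ℕ, Eext τ (σ (Xp a)) = PowerSeries.C (Xp a) := by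
    intro a
    ext n
    rw [coeff_Eext, Finset.Nat.sum_antidiagonal_eq_sum_range_succ_mk, hσ]
    rcases n with _ | m
    · simp [hτ]
    · have hstep : ∀ k ∈ Finset.range (m + 2),
          coeff k (τ (coeff (m + 1 - k) (PowerSeries.mk fun i => Xp (a + i))))
          = (if k = 0 then Xp (a + (m + 1)) else 0)
            + (if k = 1 then -Xp (a + m + 1) else 0) := by
        intro k hk
        simp only [Finset.mem_range] at hk
        rw [PowerSeries.coeff_mk, hτ, PowerSeries.coeff_mk]
        by_cases h1 : k = 0
        · subst h1
          simp
        · by_cases h2 : k = 1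
          · subst h2
            have e1 : m + 1 - 1 = m := by omega
            have e2 : a + m + 1 = a + (m + 1 - 1) + 1 := by omega
            simp [e1, e2]
          · simp [h1, h2]
      rw [Finset.sum_congr rfl hstep, Finset.sum_add_distrib,
        Finset.sum_ite_eq' _ 0 (fun _ => Xp (a + (m + 1))),
        Finset.sum_ite_eq' _ 1 (fun _ => -Xp (a + m + 1))]
      have : a + (m + 1) = a + m + 1 := by omega
      simp [this]
  -- the key claim, by induction on the exterior algebra
  have key : ∀ u : A, Eext σ (τ u) = PowerSeries.C u ∧ Eext τ (σ u) = PowerSeries.C u := by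
    intro u
    induction u using ExteriorAlgebra.induction with
    | algebraMap r =>
      constructor
      · rw [halg τ r, Eext_C, halg σ r]
      · rw [halg σ r, Eext_C, halg τ r]
    | ι v =>
      induction v using Finsupp.induction with
      | zero =>
        constructor <;>
          · rw [map_zero, map_zero]
            ext n
            simp [coeff_Eext]
      | single_add a b f _ _ ih =>
        rw [map_add]
        constructor
        · rw [map_add, Eext_add, ih.1]
          have hs : ExteriorAlgebra.ι ℚ (Finsupp.single a b : V)
              = algebraMap ℚ A b * Xp a := by
            have : (Finsupp.single a b : V) = b • Finsupp.single a 1 := by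
              rw [Finsupp.smul_single, smul_eq_mul, mul_one]
            rw [this, map_smul, Algebra.smul_def]
            rfl
          rw [hs, map_mul, halg τ b, Eext_mul, Eext_C, halg σ b, base1, map_add, ← map_mul]
        · rw [map_add, Eext_add, ih.2]
          have hs : ExteriorAlgebra.ι ℚ (Finsupp.single a b : V)
              = algebraMap ℚ A b * Xp a := by
            have : (Finsupp.single a b : V) = b • Finsupp.single a 1 := by
              rw [Finsupp.smul_single, smul_eq_mul, mul_one]
            rw [this, map_smul, Algebra.smul_def]
            rfl
          rw [hs, map_mul, halg σ b, Eext_mul, Eext_C, halg τ b, base2, map_add, ← map_mul]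
    | mul x y hx hy =>
      constructor
      · rw [map_mul, Eext_mul, hx.1, hy.1, ← map_mul]
      · rw [map_mul, Eext_mul, hx.2, hy.2, ← map_mul]
    | add x y hx hy =>
      constructor
      · rw [map_add, Eext_add, hx.1, hy.1, ← map_add]
      · rw [map_add, Eext_add, hx.2, hy.2, ← map_add]
  constructor
  · intro u n
    rw [← coeff_Eext, (key u).1, PowerSeries.coeff_C]
  · intro u n
    rw [← coeff_Eext, (key u).2, PowerSeries.coeff_C]
end
end

section
/- Let σ₋(w) be the Hasse–Schmidt derivation on ⋀ℚ[X] with σ₋(w)X^j = ∑_{i=0}^{j} X^{j-i} w^{-i}, and σ₊(t)X^j = ∑_{i≥0} X^{j+i}t^i. Then in ⋀¹V⟦t, w^{-1}⟧: σ₋(w)σ₊(t)X^0 = (1 − t/w)^{-1} · σ₊(t)X^0 = exp(∑_{i≥1} t^i/(i·w^i)) · σ₊(t)X^0. -/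
noncomputable section

/-- The scalar ring `ℚ⟦t, w⁻¹⟧`, a power-series ring in two variables: variable `0`
is `t` and variable `1` is `u = w⁻¹`. -/
abbrev R2 : Type := MvPowerSeries (Fin 2) ℚ

def T : R2 := MvPowerSeries.X 0
def U : R2 := MvPowerSeries.X 1

/-- `⋀¹V⟦t, w⁻¹⟧`, encoded by coordinates: the value at `n` is the coefficient of `X^n`. -/
abbrev W : Type := ℕ → R2

/-- `σ₊(t)` in coordinates: `σ₊(t)X^j = ∑_{i≥0} X^{j+i}t^i`, i.e.
`(σ₊(t)f)(n) = ∑_{j ≤ n} t^{n-j} f(j)`. -/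
def Sigup : W → W := fun f n => ∑ j ∈ Finset.range (n + 1), T ^ (n - j) * f j

/-- `σ₋(w)` in coordinates: `σ₋(w)f = ∑_{a ≥ 0} u^a · (shift of f)`; the coefficient of a
monomial `d` only receives contributions from `a ≤ d(u)`, making the sum finite. -/
def Sdown : W → W := fun f n =>
  (fun d => ∑ a ∈ Finset.range (d 1 + 1), MvPowerSeries.coeff d (U ^ a * f (n + a)) : R2)

/-- `X^0` in coordinates. -/
def X0 : W := fun n => if n = 0 then 1 else 0

/-- The formal exponential of a multivariate power series with zero constant term. -/
def expMv (f : R2) : R2 :=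
  (fun d => ∑ k ∈ Finset.range ((d.sum fun _ n => n) + 1),
      MvPowerSeries.coeff d (f ^ k) / (Nat.factorial k) : R2)

/-- `∑_{i ≥ 1} t^i/(i·w^i)`: the coefficient of `t^i u^i` is `1/i` for `i ≥ 1`. -/
def P : R2 :=
  (fun d => if 1 ≤ d 0 ∧ d 0 = d 1 then 1 / (d 0 : ℚ) else 0 : R2)

/-! ### Auxiliary material -/

open Finset

/-- `L = ∑_{i≥1} x^i / i` in one variable. -/
def Laux : PowerSeries ℚ := PowerSeries.mk fun i => if i = 0 then 0 else 1 / i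

def baux (n k : ℕ) : ℚ := PowerSeries.coeff n (Laux ^ k)

lemma baux_zero (n : ℕ) : baux n 0 = if n = 0 then 1 else 0 := by
  simp [baux, PowerSeries.coeff_one]

lemma baux_eq_zero {n k : ℕ} (h : n < k) : baux n k = 0 := by
  have hX : (PowerSeries.X : PowerSeries ℚ) ∣ Laux := by
    rw [PowerSeries.X_dvd_iff]
    simp [Laux, PowerSeries.constantCoeff_mk]
  have : (PowerSeries.X : PowerSeries ℚ) ^ k ∣ Laux ^ k := pow_dvd_pow_of_dvd hX k
  exact (PowerSeries.X_pow_dvd_iff.mp this) n h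

lemma coeff_Laux (m : ℕ) : PowerSeries.coeff m Laux = if m = 0 then 0 else 1 / (m : ℚ) := by
  simp [Laux]

lemma dLaux : PowerSeries.derivative ℚ Laux = PowerSeries.mk fun _ => 1 := by
  ext m
  rw [PowerSeries.coeff_derivative]
  simp only [Laux, PowerSeries.coeff_mk, Nat.succ_ne_zero, if_false]
  rw [div_mul_eq_mul_div, one_mul, div_eq_one_iff_eq]
  · push_cast; ring
  · exact_mod_cast Nat.succ_ne_zero m

lemma keyaux (n k : ℕ) :
    ((n + 1 : ℕ) : ℚ) * baux (n + 1) (k + 1) = (k + 1) * ∑ i ∈ range (n + 1), baux i k := by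
  have h1 : PowerSeries.derivative ℚ (Laux ^ (k + 1)) =
      (k + 1) • (Laux ^ k • PowerSeries.derivative ℚ Laux) := by
    simpa using Derivation.leibniz_pow (PowerSeries.derivative ℚ) (a := Laux) (k + 1)
  have h2 := congrArg (PowerSeries.coeff n) h1
  rw [PowerSeries.coeff_derivative] at h2
  have h3 : PowerSeries.coeff n ((k + 1 : ℕ) • (Laux ^ k • PowerSeries.derivative ℚ Laux))
      = (k + 1) * PowerSeries.coeff n (Laux ^ k * PowerSeries.derivative ℚ Laux) := by
    rw [smul_eq_mul, map_nsmul]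
    push_cast
    ring
  rw [h3, dLaux] at h2
  have h4 : PowerSeries.coeff n (Laux ^ k * PowerSeries.mk fun _ => (1:ℚ))
      = ∑ i ∈ range (n + 1), baux i k := by
    rw [PowerSeries.coeff_mul, Finset.Nat.sum_antidiagonal_eq_sum_range_succ_mk]
    simp [baux]
  rw [h4] at h2
  calc ((n + 1 : ℕ) : ℚ) * baux (n + 1) (k + 1)
      = PowerSeries.coeff (n+1) (Laux ^ (k+1)) * (n + 1) := by push_cast [baux]; ring
    _ = (k + 1) * ∑ i ∈ range (n + 1), baux i k := h2

def eaux (n : ℕ) : ℚ := ∑ k ∈ range (n + 1), baux n k / (Nat.factorial k)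

lemma eaux_eq_one : ∀ n, eaux n = 1 := by
  intro n
  induction n using Nat.strong_induction_on with
  | _ n ih =>
    match n with
    | 0 => simp [eaux, baux_zero]
    | Nat.succ n =>
      have h0 : eaux (n + 1)
          = ∑ k ∈ range (n + 1), baux (n + 1) (k + 1) / (Nat.factorial (k+1)) := by
        rw [eaux, Finset.sum_range_succ']
        simp [baux_eq_zero (Nat.succ_pos n), baux_zero]
      have hmul : ((n + 1 : ℕ) : ℚ) * eaux (n + 1) = ((n+1 : ℕ) : ℚ) := by
        rw [h0, Finset.mul_sum]
        have step : ∀ k ∈ range (n + 1),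
            ((n + 1 : ℕ) : ℚ) * (baux (n + 1) (k + 1) / (Nat.factorial (k+1)))
            = ∑ i ∈ range (n + 1), baux i k / (Nat.factorial k) := by
          intro k _
          rw [mul_div_assoc', keyaux n k, Nat.factorial_succ, Finset.mul_sum, Finset.sum_div]
          apply Finset.sum_congr rfl
          intro i _
          have hk1 : ((k:ℚ)+1) ≠ 0 := by positivity
          have hkf : ((Nat.factorial k : ℚ)) ≠ 0 := by exact_mod_cast Nat.factorial_ne_zero k
          push_cast
          field_simp
        rw [Finset.sum_congr rfl step, Finset.sum_comm]
        have inner : ∀ i ∈ range (n + 1),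
            ∑ k ∈ range (n + 1), baux i k / (Nat.factorial k) = 1 := by
          intro i hi
          rw [Finset.mem_range] at hi
          have hsub : range (i + 1) ⊆ range (n + 1) := by
            apply Finset.range_subset_range.2; omega
          rw [← Finset.sum_subset hsub (by
            intro k _ hk
            rw [Finset.mem_range, not_lt] at hk
            rw [baux_eq_zero (by omega), zero_div])]
          exact ih i (by omega)
        rw [Finset.sum_congr rfl inner]
        simp
      have hne : ((n + 1 : ℕ) : ℚ) ≠ 0 := by positivity
      field_simp at hmul
      exact hmul

/-- helper: the finsupp on `Fin 2` with values `a, b`. -/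
def fs (a b : ℕ) : Fin 2 →₀ ℕ := Finsupp.single 0 a + Finsupp.single 1 b

@[simp] lemma fs_apply0 (a b : ℕ) : fs a b 0 = a := by simp [fs, Finsupp.single_apply]
@[simp] lemma fs_apply1 (a b : ℕ) : fs a b 1 = b := by simp [fs, Finsupp.single_apply]
lemma fs_eq (d : Fin 2 →₀ ℕ) : fs (d 0) (d 1) = d := by ext i; fin_cases i <;> simp
lemma fs_add (a b c d : ℕ) : fs a b + fs c d = fs (a + c) (b + d) := by
  ext i; fin_cases i <;> simp

lemma eq_fs_iff (d : Fin 2 →₀ ℕ) (a b : ℕ) : d = fs a b ↔ d 0 = a ∧ d 1 = b := by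
  constructor
  · rintro rfl; simp
  · rintro ⟨h0, h1⟩; rw [← fs_eq d, h0, h1]

lemma fs_le_iff (a b : ℕ) (d : Fin 2 →₀ ℕ) : fs a b ≤ d ↔ a ≤ d 0 ∧ b ≤ d 1 := by
  rw [Finsupp.le_iff]
  constructor
  · intro h
    constructor
    · by_cases ha : a = 0
      · simp [ha]
      · have := h 0 (by simp [Finsupp.mem_support_iff, ha]); simpa using this
    · by_cases hb : b = 0
      · simp [hb]
      · have := h 1 (by simp [Finsupp.mem_support_iff, hb]); simpa using this
  · rintro ⟨h0, h1⟩ i _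
    fin_cases i <;> simpa

lemma sub_fs_apply0 (d : Fin 2 →₀ ℕ) (a b : ℕ) : (d - fs a b) 0 = d 0 - a := by
  simp [Finsupp.tsub_apply]

lemma sub_fs_apply1 (d : Fin 2 →₀ ℕ) (a b : ℕ) : (d - fs a b) 1 = d 1 - b := by
  simp [Finsupp.tsub_apply]

lemma eq_zero_iff (d : Fin 2 →₀ ℕ) : d = 0 ↔ d 0 = 0 ∧ d 1 = 0 := by
  constructor
  · rintro rfl; simp
  · rintro ⟨h0, h1⟩; ext i; fin_cases i <;> simpa

lemma sum_antidiag (d : Fin 2 →₀ ℕ) (F : (Fin 2 →₀ ℕ) → (Fin 2 →₀ ℕ) → ℚ) :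
    ∑ p ∈ Finset.HasAntidiagonal.antidiagonal d, F p.1 p.2
    = ∑ i ∈ Finset.range (d 0 + 1), ∑ j ∈ Finset.range (d 1 + 1),
        F (fs i j) (fs (d 0 - i) (d 1 - j)) := by
  rw [← Finset.sum_product']
  apply Finset.sum_nbij' (i := fun p => (p.1 0, p.1 1))
    (j := fun q => (fs q.1 q.2, fs (d 0 - q.1) (d 1 - q.2)))
  · intro p hp
    rw [Finset.HasAntidiagonal.mem_antidiagonal] at hp
    have h0 : p.1 0 + p.2 0 = d 0 := by rw [← hp]; simp
    have h1 : p.1 1 + p.2 1 = d 1 := by rw [← hp]; simp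
    simp only [Finset.mem_product, Finset.mem_range]
    omega
  · intro q hq
    simp only [Finset.mem_product, Finset.mem_range] at hq
    rw [Finset.HasAntidiagonal.mem_antidiagonal, fs_add]
    rw [show q.1 + (d 0 - q.1) = d 0 by omega, show q.2 + (d 1 - q.2) = d 1 by omega]
    exact fs_eq d
  · intro p hp
    rw [Finset.HasAntidiagonal.mem_antidiagonal] at hp
    have h0 : p.1 0 + p.2 0 = d 0 := by rw [← hp]; simp
    have h1 : p.1 1 + p.2 1 = d 1 := by rw [← hp]; simp
    ext : 1
    · simp [fs_eq]
    · rw [show d 0 - p.1 0 = p.2 0 by omega, show d 1 - p.1 1 = p.2 1 by omega]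
      simp [fs_eq]
  · intro q hq
    simp
  · intro p hp
    rw [Finset.HasAntidiagonal.mem_antidiagonal] at hp
    have h0 : p.1 0 + p.2 0 = d 0 := by rw [← hp]; simp
    have h1 : p.1 1 + p.2 1 = d 1 := by rw [← hp]; simp
    rw [fs_eq]
    rw [show d 0 - p.1 0 = p.2 0 by omega, show d 1 - p.1 1 = p.2 1 by omega, fs_eq]

/-- the geometric series `∑ (tu)^k`. -/
def G : R2 := (fun d => if d 0 = d 1 then 1 else 0 : R2)

lemma coeff_G (d : Fin 2 →₀ ℕ) : MvPowerSeries.coeff d G = if d 0 = d 1 then 1 else 0 :=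
  rfl

lemma TU_eq : T * U = MvPowerSeries.monomial (fs 1 1) 1 := by
  have h0 : T = MvPowerSeries.monomial (Finsupp.single 0 1) 1 := by
    rw [T, ← pow_one (MvPowerSeries.X 0 : R2), MvPowerSeries.X_pow_eq]
  have h1 : U = MvPowerSeries.monomial (Finsupp.single 1 1) 1 := by
    rw [U, ← pow_one (MvPowerSeries.X 1 : R2), MvPowerSeries.X_pow_eq]
  rw [h0, h1, MvPowerSeries.monomial_mul_monomial, one_mul, fs]

lemma one_sub_mul_G : (1 - T * U) * G = 1 := by
  ext d
  rw [sub_mul, one_mul, map_sub, TU_eq, MvPowerSeries.coeff_monomial_mul, coeff_G,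
    MvPowerSeries.coeff_one]
  by_cases h : fs 1 1 ≤ d
  · rw [if_pos h, coeff_G, sub_fs_apply0, sub_fs_apply1, one_mul]
    rw [fs_le_iff] at h
    simp only [eq_zero_iff]
    split_ifs <;> first | omega | norm_num
  · rw [if_neg h, sub_zero]
    rw [fs_le_iff] at h
    simp only [eq_zero_iff]
    split_ifs <;> first | omega | norm_num

lemma invOfUnit_eq : MvPowerSeries.invOfUnit (1 - T * U) 1 = G := by
  have hc : MvPowerSeries.constantCoeff (1 - T * U) = ((1 : ℚˣ) : ℚ) := by
    simp [T, U]
  have h1 : (1 - T * U) * MvPowerSeries.invOfUnit (1 - T * U) 1 = 1 :=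
    MvPowerSeries.mul_invOfUnit _ _ hc
  calc MvPowerSeries.invOfUnit (1 - T * U) 1
      = MvPowerSeries.invOfUnit (1 - T * U) 1 * ((1 - T * U) * G) := by
        rw [one_sub_mul_G, mul_one]
    _ = ((1 - T * U) * MvPowerSeries.invOfUnit (1 - T * U) 1) * G := by ring
    _ = G := by rw [h1, one_mul]

lemma coeff_P (d : Fin 2 →₀ ℕ) :
    MvPowerSeries.coeff d P = if 1 ≤ d 0 ∧ d 0 = d 1 then 1 / (d 0 : ℚ) else 0 :=
  rfl

lemma coeff_Ppow : ∀ (k : ℕ) (d : Fin 2 →₀ ℕ),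
    MvPowerSeries.coeff d (P ^ k) = if d 0 = d 1 then baux (d 0) k else 0 := by
  intro k
  induction k with
  | zero =>
    intro d
    rw [pow_zero, MvPowerSeries.coeff_one, baux_zero]
    simp only [eq_zero_iff]
    split_ifs <;> first | omega | norm_num
  | succ k ih =>
    intro d
    rw [pow_succ, MvPowerSeries.coeff_mul, sum_antidiag d
      (fun x y => MvPowerSeries.coeff x (P ^ k) * MvPowerSeries.coeff y P)]
    by_cases h : d 0 = d 1
    · rw [if_pos h]
      have hrhs : baux (d 0) (k + 1)
          = ∑ i ∈ range (d 0 + 1), baux i k * PowerSeries.coeff (d 0 - i) Laux := by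
        rw [baux, pow_succ, PowerSeries.coeff_mul,
          Finset.Nat.sum_antidiagonal_eq_sum_range_succ_mk]
        rfl
      rw [hrhs]
      rw [← h]
      apply Finset.sum_congr rfl
      intro i hi
      rw [Finset.mem_range] at hi
      rw [Finset.sum_eq_single i]
      · have h1 : MvPowerSeries.coeff (fs i i) (P ^ k) = baux i k := by
          rw [ih]; simp
        have h2 : MvPowerSeries.coeff (fs (d 0 - i) (d 0 - i)) P
            = PowerSeries.coeff (d 0 - i) Laux := by
          rw [coeff_P, coeff_Laux]
          simp only [fs_apply0, fs_apply1]
          by_cases hz : d 0 - i = 0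
          · rw [if_neg (by omega), if_pos hz]
          · rw [if_pos ?_, if_neg hz]
            exact ⟨by omega, trivial⟩
        rw [h1, h2]
      · intro j _ hj
        rw [ih]
        simp only [fs_apply0, fs_apply1]
        rw [if_neg (by omega), zero_mul]
      · intro hmem
        exact absurd (Finset.mem_range.2 (by omega)) hmem
    · rw [if_neg h]
      apply Finset.sum_eq_zero
      intro i hi
      apply Finset.sum_eq_zero
      intro j hj
      rw [Finset.mem_range] at hi hj
      rw [ih, coeff_P]
      simp only [fs_apply0, fs_apply1]
      split_ifs <;> first | omega | norm_num

lemma dsum_eq (d : Fin 2 →₀ ℕ) : (d.sum fun _ n => n) = d 0 + d 1 := by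
  rw [Finsupp.sum_fintype _ _ (fun _ => rfl), Fin.sum_univ_two]

lemma expMv_P : expMv P = G := by
  ext d
  rw [MvPowerSeries.coeff_apply, coeff_G, expMv, dsum_eq]
  by_cases h : d 0 = d 1
  · rw [if_pos h]
    have hterm : ∀ k, MvPowerSeries.coeff d (P ^ k) / (Nat.factorial k : ℚ)
        = baux (d 0) k / (Nat.factorial k : ℚ) := by
      intro k; rw [coeff_Ppow, if_pos h]
    simp only [hterm]
    have hsub : range (d 0 + 1) ⊆ range (d 0 + d 1 + 1) := by
      apply Finset.range_subset_range.2; omega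
    rw [← Finset.sum_subset hsub (by
      intro k _ hk
      rw [Finset.mem_range, not_lt] at hk
      rw [baux_eq_zero (by omega), zero_div])]
    exact eaux_eq_one (d 0)
  · rw [if_neg h]
    apply Finset.sum_eq_zero
    intro k _
    rw [coeff_Ppow, if_neg h, zero_div]

lemma Sigup_X0 (n : ℕ) : Sigup X0 n = T ^ n := by
  rw [Sigup, Finset.sum_eq_single 0]
  · simp [X0]
  · intro j _ hj
    simp [X0, hj]
  · intro hmem
    exact absurd (Finset.mem_range.2 (by omega)) hmem

lemma UaTm (a m : ℕ) : U ^ a * T ^ m = MvPowerSeries.monomial (fs m a) 1 := by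
  rw [T, U, MvPowerSeries.X_pow_eq, MvPowerSeries.X_pow_eq,
    MvPowerSeries.monomial_mul_monomial, one_mul, fs, add_comm]

lemma Sdown_eq (n : ℕ) (d : Fin 2 →₀ ℕ) :
    Sdown (Sigup X0) n d = if d 0 = n + d 1 then 1 else 0 := by
  rw [Sdown]
  simp only [Sigup_X0, UaTm]
  rw [Finset.sum_eq_single (d 1)]
  · rw [MvPowerSeries.coeff_monomial]
    have hiff : (d = fs (n + d 1) (d 1)) ↔ d 0 = n + d 1 := by
      rw [eq_fs_iff]; tauto
    rw [if_congr hiff rfl rfl]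
  · intro a _ ha
    rw [MvPowerSeries.coeff_monomial, if_neg]
    rw [eq_fs_iff]
    omega
  · intro hmem
    exact absurd (Finset.mem_range.2 (by omega)) hmem

lemma G_mul_Tn (n : ℕ) (d : Fin 2 →₀ ℕ) :
    MvPowerSeries.coeff d (G * T ^ n) = if d 0 = n + d 1 then 1 else 0 := by
  have hfs : fs n 0 = Finsupp.single 0 n := by
    ext i; fin_cases i <;> simp
  have hT : (T : R2) ^ n = MvPowerSeries.monomial (fs n 0) 1 := by
    rw [T, MvPowerSeries.X_pow_eq, hfs]
  rw [hT, MvPowerSeries.coeff_mul_monomial]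
  by_cases h : fs n 0 ≤ d
  · rw [if_pos h, coeff_G, sub_fs_apply0, sub_fs_apply1, mul_one]
    rw [fs_le_iff] at h
    split_ifs <;> first | omega | norm_num
  · rw [if_neg h]
    rw [fs_le_iff] at h
    rw [if_neg (by omega)]

lemma Sdown_key (n : ℕ) : Sdown (Sigup X0) n = G * Sigup X0 n := by
  ext d
  rw [MvPowerSeries.coeff_apply, Sdown_eq, Sigup_X0, G_mul_Tn]

/-- `σ₋(w)σ₊(t)X^0 = (1 − t/w)⁻¹ · σ₊(t)X^0 = exp(∑_{i≥1} t^i/(i w^i)) · σ₊(t)X^0`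
in `⋀¹V⟦t, w⁻¹⟧`. -/
theorem sdown_sup_X0 :
    (∀ n, Sdown (Sigup X0) n = MvPowerSeries.invOfUnit (1 - T * U) 1 * Sigup X0 n) ∧
    (∀ n, Sdown (Sigup X0) n = expMv P * Sigup X0 n) := by
  constructor
  · intro n
    rw [invOfUnit_eq]
    exact Sdown_key n
  · intro n
    rw [expMv_P]
    exact Sdown_key n

end
end

section
/- Let ∂⁰ ∈ V* be the linear form on V = ℚ[X] with ∂⁰(X^i) = δ_{0,i}, and let ∂⁰⌟: ⋀V → ⋀V be the induced contraction (an odd derivation). Let σ₊(t) be the HS derivation with σ₊(t)X^j = ∑_{i≥0}X^{j+i}t^i. Then for every partition λ of length at most r, ∂⁰⌟(σ₊(t)X^r(λ)) = σ₊(t)(∂⁰⌟X^r(λ)). -/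
noncomputable section

/-- `X^r(λ) = X^{r-1+λ₁} ∧ X^{r-2+λ₂} ∧ ⋯ ∧ X^{λ_r}`. -/
def Xr (r : ℕ) (l : Fin r → ℕ) : ExteriorAlgebra ℚ V :=
  ((List.finRange r).map fun k : Fin r => Xp (r - 1 - k.val + l k)).prod

/-- The coefficientwise extension of a linear operator to `(⋀V)⟦t⟧`. -/
def cext (c : ExteriorAlgebra ℚ V →ₗ[ℚ] ExteriorAlgebra ℚ V)
    (f : PowerSeries (ExteriorAlgebra ℚ V)) : PowerSeries (ExteriorAlgebra ℚ V) :=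
  PowerSeries.mk fun n => c (PowerSeries.coeff n f)

lemma Xr_succ (r : ℕ) (l : Fin (r + 1) → ℕ) :
    Xr (r + 1) l = Xp (r + l 0) * Xr r (fun k => l k.succ) := by
  have htail : List.map ((fun k : Fin (r + 1) => Xp (r + 1 - 1 - k.val + l k)) ∘ Fin.succ)
      (List.finRange r) = List.map (fun k : Fin r => Xp (r - 1 - k.val + l k.succ))
      (List.finRange r) := by
    apply List.map_congr_left
    intro k _
    simp only [Function.comp_apply, Fin.val_succ]
    congr 2
    omega
  unfold Xr
  rw [List.finRange_succ, List.map_cons, List.map_map, htail, List.prod_cons]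
  congr 2

lemma keyA (c : ExteriorAlgebra ℚ V →ₗ[ℚ] ExteriorAlgebra ℚ V)
    (hc : ∀ (v : V) (u : ExteriorAlgebra ℚ V),
      c (ExteriorAlgebra.ι ℚ v * u) = (v 0) • u - ExteriorAlgebra.ι ℚ v * c u)
    (σ : ExteriorAlgebra ℚ V →+* PowerSeries (ExteriorAlgebra ℚ V))
    (hσ : ∀ j, σ (Xp j) = PowerSeries.mk fun i => Xp (j + i))
    (j : ℕ) (F : PowerSeries (ExteriorAlgebra ℚ V)) :
    cext c (σ (Xp j) * F) = (if j = 0 then F else 0) - σ (Xp j) * cext c F := by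
  ext n
  rw [map_sub]
  simp only [cext, PowerSeries.coeff_mk, PowerSeries.coeff_mul, hσ]
  rw [map_sum, Finset.sum_congr rfl (fun p _ => by
    rw [show Xp (j + p.1) = ExteriorAlgebra.ι ℚ (Finsupp.single (j + p.1) 1) from rfl, hc]),
    Finset.sum_sub_distrib]
  congr 1
  · rw [apply_ite (PowerSeries.coeff (R := ExteriorAlgebra ℚ V) n), map_zero]
    simp only [Finsupp.single_apply]
    by_cases hj : j = 0
    · subst hj
      rw [if_pos rfl, Finset.Nat.sum_antidiagonal_eq_sum_range_succ_mk]
      have h2 : ∀ i ∈ Finset.range (n + 1),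
          ((if 0 + (i, n - i).1 = 0 then (1 : ℚ) else 0) •
            (PowerSeries.coeff (R := ExteriorAlgebra ℚ V) (i, n - i).2) F)
          = if i = 0 then (PowerSeries.coeff (R := ExteriorAlgebra ℚ V) (n - i)) F else 0 := by
        intro i _
        split_ifs with h1 h2 h2 <;> simp_all
      rw [Finset.sum_congr rfl h2, Finset.sum_ite_eq' (Finset.range (n + 1)) 0
        (fun i => (PowerSeries.coeff (R := ExteriorAlgebra ℚ V) (n - i)) F)]
      simp
    · rw [if_neg hj]
      apply Finset.sum_eq_zero
      intro p _
      rw [if_neg (by omega), zero_smul]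

/-- Let `∂⁰⌟` be the contraction along the linear form `∂⁰` (with `∂⁰(X^i) = δ_{0,i}`),
i.e. the odd derivation of `⋀V` characterized by `∂⁰⌟1 = 0` and
`∂⁰⌟(v ∧ u) = ∂⁰(v)·u − v ∧ (∂⁰⌟u)` for `v ∈ V`, and let `σ₊(t)` be the
Hasse–Schmidt derivation with `σ₊(t)X^j = ∑_{i≥0}X^{j+i}t^i`.  Then for every
partition `λ` of length at most `r`, `∂⁰⌟(σ₊(t)X^r(λ)) = σ₊(t)(∂⁰⌟X^r(λ))`. -/
theorem contraction_commutes_sigma (r : ℕ)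
    (c : ExteriorAlgebra ℚ V →ₗ[ℚ] ExteriorAlgebra ℚ V)
    (hc1 : c 1 = 0)
    (hc : ∀ (v : V) (u : ExteriorAlgebra ℚ V),
      c (ExteriorAlgebra.ι ℚ v * u) = (v 0) • u - ExteriorAlgebra.ι ℚ v * c u)
    (σ : ExteriorAlgebra ℚ V →+* PowerSeries (ExteriorAlgebra ℚ V))
    (hσ : ∀ j, σ (Xp j) = PowerSeries.mk fun i => Xp (j + i))
    (l : Fin r → ℕ) (hl : Antitone l) :
    cext c (σ (Xr r l)) = σ (c (Xr r l)) := by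
  clear hl
  induction r with
  | zero =>
    have h1 : Xr 0 l = 1 := by simp [Xr]
    rw [h1, hc1, map_zero, map_one]
    ext n
    simp only [cext, PowerSeries.coeff_mk, PowerSeries.coeff_one, map_zero]
    rw [apply_ite c, hc1, map_zero]
    simp
  | succ r ih =>
    rw [Xr_succ, map_mul, keyA c hc σ hσ, ih,
      show Xp (r + l 0) = ExteriorAlgebra.ι ℚ (Finsupp.single (r + l 0) 1) from rfl,
      hc, map_sub, map_mul, Finsupp.single_apply]
    congr 1
    split_ifs with h
    · rw [one_smul]
    · rw [zero_smul, map_zero]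
end
end

section
/- For all u ∈ ⋀^r V the equality σ₊(z)X^0 ∧ u = z^r σ₊(z)σ̄₋(z)(σ̄_r u ∧ X^0) holds in ⋀^{r+1}V⟦z, z^{-1}⟧, where σ₊(z), σ̄₋(z) are the Schubert derivations with σ₊(z)X^j = ∑_{i≥0}X^{j+i}z^i, σ̄₋(z)X^j = X^j − X^{j−1}z^{−1} (with X^i = 0 for i < 0), and σ̄_r is the r-th coefficient of σ̄₊(z) = ∑_i (−1)^i σ̄_i z^i. -/
noncomputable section

namespace SigmaAux

open PowerSeries

abbrev A : Type := ExteriorAlgebra ℚ V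

lemma ι_anticomm (v w : V) :
    ExteriorAlgebra.ι ℚ v * ExteriorAlgebra.ι ℚ w
      = -(ExteriorAlgebra.ι ℚ w * ExteriorAlgebra.ι ℚ v) :=
  eq_neg_of_add_eq_zero_left (ExteriorAlgebra.ι_add_mul_swap v w)

def DrS (r : ℕ) : Submodule ℚ A where
  carrier := {y | ∀ v : V, y * ExteriorAlgebra.ι ℚ v = ((-1:ℚ)^r) • (ExteriorAlgebra.ι ℚ v * y)}
  add_mem' := by
    intro a b ha hb v
    simp [add_mul, mul_add, ha v, hb v, smul_add]
  zero_mem' := by intro v; simp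
  smul_mem' := by
    intro q y hy v
    simp only [smul_mul_assoc, hy v, mul_smul_comm]
    rw [smul_comm]

lemma DrS_one : (1 : A) ∈ DrS 0 := by intro v; simp

lemma DrS_mul {r : ℕ} {y : A} (b : ℕ) (h : y ∈ DrS r) : Xp b * y ∈ DrS (r+1) := by
  intro v
  rw [mul_assoc, h v, mul_smul_comm, ← mul_assoc]
  simp only [Xp]
  rw [ι_anticomm, pow_succ]
  rw [neg_mul, mul_assoc, mul_smul]
  simp

variable (σp σbp σm : A →+* PowerSeries A)
variable (hσp : ∀ j, σp (Xp j) = PowerSeries.mk fun i => Xp (j + i))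
variable (hσbp : ∀ j, σbp (Xp j) =
      PowerSeries.mk fun i => if i = 0 then Xp j else if i = 1 then -Xp (j + 1) else 0)
variable (hσm : ∀ j, σm (Xp j) =
      PowerSeries.mk fun i =>
        if i = 0 then Xp j
        else if i = 1 then (if j = 0 then 0 else -Xp (j - 1)) else 0)

include hσbp in
lemma sbp_Xp (a : ℕ) : σbp (Xp a) = C (Xp a) - X * C (Xp (a+1)) := by
  rw [hσbp]
  ext n
  rcases n with _ | n
  · simp
  · rcases n with _ | n <;> simp [coeff_succ_X_mul, coeff_C, coeff_X]

include hσm in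
lemma sm_Xp_succ (a : ℕ) : σm (Xp (a+1)) = C (Xp (a+1)) - X * C (Xp a) := by
  rw [hσm]
  ext n
  rcases n with _ | n
  · simp
  · rcases n with _ | n <;> simp [coeff_succ_X_mul, coeff_C, coeff_X]

include hσm in
lemma sm_Xp0 : σm (Xp 0) = C (Xp 0) := by
  rw [hσm]
  ext n
  rcases n with _ | n
  · simp
  · rcases n with _ | n <;> simp [coeff_C]

include hσp in
lemma sp_shift (a : ℕ) : σp (Xp a) = C (Xp a) + X * σp (Xp (a+1)) := by
  rw [hσp, hσp]
  ext n
  rcases n with _ | n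
  · simp
  · simp [coeff_succ_X_mul, coeff_C, Nat.add_comm, Nat.add_assoc, Nat.add_left_comm]

include hσp in
lemma coeff_sp_Xp (a i : ℕ) : coeff i (σp (Xp a)) = Xp (a + i) := by rw [hσp]; simp

structure Good (r : ℕ) (u : A) : Prop where
  pa : ∀ j, r < j → coeff j (σbp u) = 0
  pd : ∀ i s, coeff s (σp (coeff i (σbp u))) ∈ DrS r
  pc : (∑ i ∈ Finset.range (r+1), (X : PowerSeries A)^i * σp (coeff i (σbp u))) = C u
  pb : ∀ j, coeff j (σm (((-1:ℚ)^r • coeff r (σbp u)) * Xp 0)) =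
        if j ≤ r then (-1:ℚ)^r • (coeff (r-j) (σbp u) * Xp 0) else 0

lemma csmul (j : ℕ) (q : ℚ) (f : PowerSeries A) : coeff j (q • f) = q • coeff j f :=
  map_rat_smul (coeff j) q f

lemma rsmul (f : A →+* PowerSeries A) (q : ℚ) (x : A) : f (q • x) = q • f x :=
  map_rat_smul f q x

lemma Csmul (q : ℚ) (x : A) : C (q • x) = q • C x := map_rat_smul (C (R := A)) q x

lemma good_zero (r : ℕ) : Good σp σbp σm r 0 := by
  refine ⟨?_, ?_, ?_, ?_⟩ <;> simp [Submodule.zero_mem]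

include hσm in
lemma good_one : Good σp σbp σm 0 1 := by
  refine ⟨?_, ?_, ?_, ?_⟩
  · intro j hj
    rw [map_one, coeff_one, if_neg (by omega : ¬ j = 0)]
  · intro i s
    rcases Nat.eq_zero_or_pos i with rfl | hi
    · rw [map_one, coeff_one, if_pos rfl, map_one, coeff_one]
      split
      · exact DrS_one
      · exact Submodule.zero_mem _
    · rw [map_one, coeff_one, if_neg (by omega : ¬ i = 0), map_zero, map_zero]
      exact Submodule.zero_mem _
  · simp [coeff_one]
  · intro j
    rw [map_one, coeff_one, if_pos rfl, pow_zero, one_smul, one_mul, sm_Xp0 σm hσm, coeff_C]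
    rcases Nat.eq_zero_or_pos j with rfl | hj
    · simp
    · rw [if_neg (by omega : ¬ j = 0), if_neg (by omega : ¬ j ≤ 0)]

lemma good_smul {r : ℕ} {u : A} (q : ℚ) (h : Good σp σbp σm r u) : Good σp σbp σm r (q • u) := by
  have hbp : σbp (q • u) = q • σbp u := rsmul σbp q u
  refine ⟨?_, ?_, ?_, ?_⟩
  · intro j hj
    rw [hbp, csmul, h.pa j hj, smul_zero]
  · intro i s
    rw [hbp, csmul, rsmul σp, csmul]
    exact Submodule.smul_mem _ q (h.pd i s)
  · rw [Csmul, ← h.pc, Finset.smul_sum]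
    exact Finset.sum_congr rfl fun i _ => by rw [hbp, csmul, rsmul σp, mul_smul_comm]
  · intro j
    rw [hbp, csmul, csmul, smul_comm ((-1:ℚ)^r) q, smul_mul_assoc, rsmul σm, csmul, h.pb j]
    split <;> simp [smul_mul_assoc, smul_comm q]

lemma good_add {r : ℕ} {u w : A} (hu : Good σp σbp σm r u) (hw : Good σp σbp σm r w) :
    Good σp σbp σm r (u + w) := by
  refine ⟨?_, ?_, ?_, ?_⟩
  · intro j hj
    rw [map_add, map_add, hu.pa j hj, hw.pa j hj, add_zero]
  · intro i s
    rw [map_add, map_add, map_add, map_add]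
    exact Submodule.add_mem _ (hu.pd i s) (hw.pd i s)
  · simp only [map_add, mul_add, Finset.sum_add_distrib, hu.pc, hw.pc]
  · intro j
    simp only [map_add, smul_add, add_mul, hu.pb j, hw.pb j]
    split <;> simp [smul_add, add_mul]


include hσbp in
lemma coeff_sbp_mul (a : ℕ) (x : A) (j : ℕ) :
    coeff j (σbp (Xp a * x)) =
      Xp a * coeff j (σbp x)
        - Xp (a+1) * (if j = 0 then 0 else coeff (j-1) (σbp x)) := by
  rw [map_mul, sbp_Xp σbp hσbp, sub_mul, map_sub, coeff_C_mul, mul_assoc]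
  congr 1
  rcases j with _ | j
  · simp
  · rw [coeff_succ_X_mul, coeff_C_mul, if_neg (Nat.succ_ne_zero j), Nat.add_sub_cancel]

include hσp hσbp hσm in
lemma good_step {r : ℕ} {x : A} (a : ℕ) (h : Good σp σbp σm r x) :
    Good σp σbp σm (r+1) (Xp a * x) := by
  have key := coeff_sbp_mul σbp hσbp a x
  refine ⟨?_, ?_, ?_, ?_⟩
  · intro j hj
    rcases j with _ | j
    · exact absurd hj (by omega)
    · rw [key, h.pa (j+1) (by omega), mul_zero, zero_sub, neg_eq_zero,
        if_neg (Nat.succ_ne_zero j), Nat.add_sub_cancel, h.pa j (by omega), mul_zero]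
  · intro i s
    rw [key i, map_sub, map_mul, map_mul, map_sub]
    refine Submodule.sub_mem _ ?_ ?_
    · rw [coeff_mul]
      refine Submodule.sum_mem _ fun p _ => ?_
      rw [coeff_sp_Xp σp hσp]
      exact DrS_mul _ (h.pd i p.2)
    · rcases i with _ | i
      · rw [if_pos rfl, map_zero, mul_zero, map_zero]
        exact Submodule.zero_mem _
      · rw [if_neg (Nat.succ_ne_zero i), Nat.add_sub_cancel, coeff_mul]
        refine Submodule.sum_mem _ fun p _ => ?_
        rw [coeff_sp_Xp σp hσp]
        exact DrS_mul _ (h.pd i p.2)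
  · have expand : ∀ i, (X : PowerSeries A)^i * σp (coeff i (σbp (Xp a * x)))
        = σp (Xp a) * ((X:PowerSeries A)^i * σp (coeff i (σbp x)))
          - σp (Xp (a+1)) * ((X:PowerSeries A)^i
              * σp (if i = 0 then 0 else coeff (i-1) (σbp x))) := by
      intro i
      rw [key i, map_sub, map_mul, map_mul, mul_sub]
      congr 1 <;> rw [← mul_assoc, ← ((commute_X (σp _)).pow_right i).eq, mul_assoc]
    have hsum1 : (∑ i ∈ Finset.range (r+2),
        σp (Xp a) * ((X:PowerSeries A)^i * σp (coeff i (σbp x)))) = σp (Xp a) * C x := by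
      rw [← Finset.mul_sum, Finset.sum_range_succ, h.pa (r+1) (by omega), map_zero, mul_zero,
        add_zero, h.pc]
    have hsum2 : (∑ i ∈ Finset.range (r+2),
        σp (Xp (a+1)) * ((X:PowerSeries A)^i
          * σp (if i = 0 then 0 else coeff (i-1) (σbp x))))
        = σp (Xp (a+1)) * (X * C x) := by
      rw [← Finset.mul_sum, Finset.sum_range_succ', if_pos rfl, map_zero, mul_zero, add_zero]
      congr 1
      rw [← h.pc, Finset.mul_sum]
      refine Finset.sum_congr rfl fun i _ => ?_
      rw [if_neg (Nat.succ_ne_zero i), Nat.add_sub_cancel, pow_succ', mul_assoc]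
    calc (∑ i ∈ Finset.range (r+1+1), (X:PowerSeries A)^i * σp (coeff i (σbp (Xp a * x))))
        = (∑ i ∈ Finset.range (r+2),
            σp (Xp a) * ((X:PowerSeries A)^i * σp (coeff i (σbp x))))
          - ∑ i ∈ Finset.range (r+2),
              σp (Xp (a+1)) * ((X:PowerSeries A)^i
                * σp (if i = 0 then 0 else coeff (i-1) (σbp x))) := by
          rw [← Finset.sum_sub_distrib]
          exact Finset.sum_congr rfl fun i _ => expand i
      _ = C (Xp a * x) := by
          rw [hsum1, hsum2, map_mul, sp_shift σp hσp a, ← mul_assoc,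
            ← (commute_X (σp (Xp (a+1)))).eq]
          noncomm_ring
  · intro j
    have harg : ((-1:ℚ)^(r+1) • coeff (r+1) (σbp (Xp a * x))) * Xp 0
        = Xp (a+1) * (((-1:ℚ)^r • coeff r (σbp x)) * Xp 0) := by
      rw [key (r+1), h.pa (r+1) (by omega), mul_zero, zero_sub,
        if_neg (Nat.succ_ne_zero r), Nat.add_sub_cancel]
      rw [pow_succ, mul_comm ((-1:ℚ)^r) (-1:ℚ), mul_smul, neg_one_smul, smul_neg, neg_neg]
      simp [smul_mul_assoc, mul_smul_comm, mul_assoc]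
    rw [harg, map_mul, sm_Xp_succ σm hσm a, sub_mul, map_sub, coeff_C_mul, mul_assoc]
    rcases j with _ | j
    · rw [coeff_zero_X_mul, h.pb 0, if_pos (Nat.zero_le r), sub_zero,
        if_pos (by omega : 0 ≤ r+1)]
      simp only [Nat.sub_zero]
      rw [key (r+1), h.pa (r+1) (by omega), mul_zero, zero_sub,
        if_neg (Nat.succ_ne_zero r), Nat.add_sub_cancel]
      rw [pow_succ, mul_comm ((-1:ℚ)^r) (-1:ℚ), mul_smul, neg_one_smul]
      simp [smul_mul_assoc, mul_smul_comm, mul_assoc, neg_mul, smul_neg]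
    · rw [coeff_succ_X_mul, coeff_C_mul, h.pb (j+1), h.pb j]
      by_cases h1 : j + 1 ≤ r
      · rw [if_pos h1, if_pos (by omega : j ≤ r), if_pos (by omega : j+1 ≤ r+1),
          show r + 1 - (j+1) = r - j from by omega, key (r-j),
          if_neg (by omega : ¬ r - j = 0), show r - j - 1 = r - (j+1) from by omega]
        rw [pow_succ, mul_comm ((-1:ℚ)^r) (-1:ℚ), mul_smul, neg_one_smul]
        simp [smul_mul_assoc, mul_smul_comm, mul_assoc, smul_sub, sub_mul, mul_sub, neg_sub]
      · by_cases h2 : j ≤ r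
        · rw [if_neg h1, if_pos h2, if_pos (by omega : j+1 ≤ r+1),
            show r + 1 - (j+1) = 0 from by omega, key 0, if_pos rfl, mul_zero, sub_zero,
            show r - j = 0 from by omega, zero_sub]
          rw [pow_succ, mul_comm ((-1:ℚ)^r) (-1:ℚ), mul_smul, neg_one_smul]
          simp [smul_mul_assoc, mul_smul_comm, mul_assoc, neg_mul]
        · rw [if_neg h1, if_neg h2, if_neg (by omega : ¬ j+1 ≤ r+1)]
          simp

include hσp hσbp hσm in
lemma good_of_mem {r : ℕ} {u : A} (hu : u ∈ ⋀[ℚ]^r V) : Good σp σbp σm r u := by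
  refine Submodule.pow_induction_on_left'
    (M := LinearMap.range (ExteriorAlgebra.ι ℚ : V →ₗ[ℚ] A))
    (C := fun n y _ => Good σp σbp σm n y) ?_ ?_ ?_ hu
  · intro q
    rw [Algebra.algebraMap_eq_smul_one q]
    exact good_smul σp σbp σm q (good_one σp σbp σm hσm)
  · intro y z i _ _ hy hz
    exact good_add σp σbp σm hy hz
  · rintro m ⟨w, rfl⟩ i z _ hz
    induction w using Finsupp.induction_linear with
    | zero => simpa using good_zero σp σbp σm (i+1)
    | add f g hf hg =>
        rw [map_add, add_mul]
        exact good_add σp σbp σm hf hg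
    | single b q =>
        have hs : (Finsupp.single b q : V) = q • Finsupp.single b 1 := by
          rw [Finsupp.smul_single, smul_eq_mul, mul_one]
        rw [hs, map_smul, smul_mul_assoc]
        have : (ExteriorAlgebra.ι ℚ (Finsupp.single b 1) : A) = Xp b := rfl
        rw [this]
        exact good_smul σp σbp σm q (good_step σp σbp σm hσp hσbp hσm b hz)

lemma sum_reflect' {M : Type*} [AddCommMonoid M] (g : ℕ → M) (r : ℕ) :
    ∑ j ∈ Finset.range (r+1), g (r - j) = ∑ j ∈ Finset.range (r+1), g j := by
  have h := Finset.sum_range_reflect g (r+1)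
  simpa using h

end SigmaAux

open SigmaAux

/-- For all `u ∈ ⋀^r V`, `σ₊(z)X^0 ∧ u = z^r σ₊(z)σ̄₋(z)(σ̄_r u ∧ X^0)`.
Here `σ₊(z)`, `σ̄₊(z)`, `σ̄₋(z)` are the Schubert derivations (multiplicative maps to
power series in `z`, resp. in `z⁻¹`) determined on `V` by
`σ₊(z)X^j = ∑_{i≥0}X^{j+i}z^i`, `σ̄₊(z)X^j = X^j − X^{j+1}z`,
`σ̄₋(z)X^j = X^j − X^{j−1}z⁻¹` (with `X^{-1} = 0`), and `σ̄_r u` is `(−1)^r` times the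
`r`-th coefficient of `σ̄₊(z)u`.  The identity is stated coefficientwise in `z^n`,
`n ∈ ℤ`: the coefficient of `z^n` of the composite series `σ₊(z)σ̄₋(z)` applied to
`v = σ̄_r u ∧ X^0` is `∑_j σ_{n+j}(σ̄₋ⱼ v)`; since `v ∈ ⋀^{r+1}V`, only `j ≤ r+1`
contributes. -/

theorem sigma_shift_formula (r : ℕ)
    (σp σbp σm : ExteriorAlgebra ℚ V →+* PowerSeries (ExteriorAlgebra ℚ V))
    (hσp : ∀ j, σp (Xp j) = PowerSeries.mk fun i => Xp (j + i))
    (hσbp : ∀ j, σbp (Xp j) =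
      PowerSeries.mk fun i => if i = 0 then Xp j else if i = 1 then -Xp (j + 1) else 0)
    (hσm : ∀ j, σm (Xp j) =
      PowerSeries.mk fun i =>
        if i = 0 then Xp j
        else if i = 1 then (if j = 0 then 0 else -Xp (j - 1)) else 0)
    (u : ExteriorAlgebra ℚ V) (hu : u ∈ ⋀[ℚ]^r V) :
    ∀ n : ℤ,
      (if h : 0 ≤ n then
          PowerSeries.coeff n.toNat (σp (Xp 0) * PowerSeries.C u)
        else 0) =
      ∑ j ∈ Finset.range (r + 2),
        (if h : (0 : ℤ) ≤ n - r + j then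
            PowerSeries.coeff (n - r + j).toNat
              (σp (PowerSeries.coeff j
                (σm (((-1 : ℚ) ^ r • PowerSeries.coeff r (σbp u)) * Xp 0))))
          else 0) := by
  intro n
  classical
  have g := good_of_mem σp σbp σm hσp hσbp hσm hu
  have hterm : ∀ j : ℕ,
      σp (PowerSeries.coeff j (σm (((-1:ℚ)^r • PowerSeries.coeff r (σbp u)) * Xp 0)))
        = if j ≤ r then
            (-1:ℚ)^r • (σp (PowerSeries.coeff (r-j) (σbp u)) * σp (Xp 0)) else 0 := by
    intro j
    rw [g.pb j]
    split
    · rw [rsmul σp, map_mul]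
    · exact map_zero σp
  have hswap : ∀ i m : ℕ,
      (-1:ℚ)^r • PowerSeries.coeff m (σp (PowerSeries.coeff i (σbp u)) * σp (Xp 0))
        = PowerSeries.coeff m (σp (Xp 0) * σp (PowerSeries.coeff i (σbp u))) := by
    intro i m
    rw [PowerSeries.coeff_mul, PowerSeries.coeff_mul, Finset.smul_sum,
      ← Finset.Nat.sum_antidiagonal_swap
        (f := fun p => PowerSeries.coeff p.1 (σp (Xp 0))
          * PowerSeries.coeff p.2 (σp (PowerSeries.coeff i (σbp u))))]
    refine Finset.sum_congr rfl fun p _ => ?_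
    have hx : ∀ q : ℕ, PowerSeries.coeff q (σp (Xp 0))
        = ExteriorAlgebra.ι ℚ (Finsupp.single q 1) := by
      intro q; rw [coeff_sp_Xp σp hσp, Nat.zero_add]; rfl
    simp only [Prod.fst_swap, Prod.snd_swap, hx]
    rw [g.pd i p.1 (Finsupp.single p.2 1), smul_smul]
    have h1 : ((-1:ℚ)^r * (-1:ℚ)^r) = 1 := by rw [← pow_add, ← two_mul, pow_mul]; norm_num
    rw [h1, one_smul]
  have hmain : ∀ j : ℕ, j ≤ r →
      (if h : (0:ℤ) ≤ n - r + j then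
          PowerSeries.coeff (n - r + j).toNat
            (σp (PowerSeries.coeff j
              (σm (((-1:ℚ)^r • PowerSeries.coeff r (σbp u)) * Xp 0)))) else 0)
        = if h : (0:ℤ) ≤ n - (r - j : ℕ) then
            PowerSeries.coeff (n - (r - j : ℕ)).toNat
              (σp (Xp 0) * σp (PowerSeries.coeff (r-j) (σbp u))) else 0 := by
    intro j hj
    rw [hterm j, if_pos hj]
    have hc : ((r - j : ℕ) : ℤ) = (r:ℤ) - j := by omega
    split
    · rw [dif_pos (by omega : (0:ℤ) ≤ n - ((r-j:ℕ):ℤ))]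
      rw [show (n - r + (j:ℤ)).toNat = (n - ((r - j : ℕ):ℤ)).toNat from by omega]
      rw [map_rat_smul (PowerSeries.coeff (n - ((r - j : ℕ):ℤ)).toNat), hswap]
    · rw [dif_neg (by omega : ¬ (0:ℤ) ≤ n - ((r-j:ℕ):ℤ))]
  have hlast :
      (if h : (0:ℤ) ≤ n - r + ((r+1 : ℕ) : ℤ) then
          PowerSeries.coeff (n - r + ((r+1:ℕ):ℤ)).toNat
            (σp (PowerSeries.coeff (r+1)
              (σm (((-1:ℚ)^r • PowerSeries.coeff r (σbp u)) * Xp 0)))) else 0) = 0 := by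
    rw [hterm (r+1), if_neg (by omega : ¬ r+1 ≤ r)]
    split <;> simp
  have step1 : (∑ j ∈ Finset.range (r + 2),
      (if h : (0 : ℤ) ≤ n - r + j then
            PowerSeries.coeff (n - r + j).toNat
              (σp (PowerSeries.coeff j
                (σm (((-1 : ℚ) ^ r • PowerSeries.coeff r (σbp u)) * Xp 0))))
          else 0))
      = ∑ i ∈ Finset.range (r + 1),
          (if h : (0:ℤ) ≤ n - (i : ℕ) then
            PowerSeries.coeff (n - (i : ℕ)).toNat
              (σp (Xp 0) * σp (PowerSeries.coeff i (σbp u))) else 0) := by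
    rw [Finset.sum_range_succ, hlast, add_zero,
      Finset.sum_congr rfl (fun j hj => hmain j (by
        have := Finset.mem_range.mp hj; omega))]
    exact sum_reflect'
      (fun i => if h : (0:ℤ) ≤ n - (i : ℕ) then
        PowerSeries.coeff (n - (i : ℕ)).toNat
          (σp (Xp 0) * σp (PowerSeries.coeff i (σbp u))) else 0) r
  rw [step1]
  by_cases hn : (0:ℤ) ≤ n
  · rw [dif_pos hn]
    have hterm2 : ∀ i : ℕ,
        (if h : (0:ℤ) ≤ n - (i:ℕ) then
            PowerSeries.coeff (n - (i:ℕ)).toNat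
              (σp (Xp 0) * σp (PowerSeries.coeff i (σbp u))) else 0)
          = PowerSeries.coeff n.toNat ((PowerSeries.X (R := A))^i
              * (σp (Xp 0) * σp (PowerSeries.coeff i (σbp u)))) := by
      intro i
      rw [PowerSeries.coeff_X_pow_mul']
      split
      · rename_i h
        rw [if_pos (by omega : i ≤ n.toNat),
          show (n - (i:ℕ)).toNat = n.toNat - i from by omega]
      · rename_i h
        rw [if_neg (by omega : ¬ i ≤ n.toNat)]
    rw [Finset.sum_congr rfl fun i _ => hterm2 i, ← map_sum]
    have hmul : ∀ i : ℕ, (PowerSeries.X (R := A))^i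
          * (σp (Xp 0) * σp (PowerSeries.coeff i (σbp u)))
        = σp (Xp 0) * ((PowerSeries.X (R := A))^i * σp (PowerSeries.coeff i (σbp u))) := by
      intro i
      rw [← mul_assoc, ← ((PowerSeries.commute_X (σp (Xp 0))).pow_right i).eq, mul_assoc]
    rw [Finset.sum_congr rfl fun i _ => hmul i, ← Finset.mul_sum, g.pc]
  · rw [dif_neg hn]
    symm
    refine Finset.sum_eq_zero fun i _ => ?_
    rw [dif_neg (by omega : ¬ (0:ℤ) ≤ n - ((i : ℕ):ℤ))]
end
end

section
/- Giambelli's formula for Schubert derivations: with ⋀^r V a module over B_r via h_i · u = σ_i u (where σ₊(z) = ∑ σ_i z^i is the Schubert derivation with σ₊(z)X^j = ∑_{i≥0}X^{j+i}z^i), for every partition λ of length at most r one has X^r(λ) = det(σ_{λ_j − j + i})_{1≤i,j≤r} · X^r(0). Consequently ⋀^r V is a free B_r-module of rank 1 generated by X^r(0) = X^{r−1} ∧ ⋯ ∧ X^0. -/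
noncomputable section

/-- The coefficient operators `σ_k` of the Schubert derivation `σ₊(z) = ∑ σ_k z^k`,
with `σ_k = 0` for `k < 0`. -/
def opOf (σp : ExteriorAlgebra ℚ V →+* PowerSeries (ExteriorAlgebra ℚ V)) (k : ℤ) :
    ExteriorAlgebra ℚ V → ExteriorAlgebra ℚ V :=
  fun u => if h : 0 ≤ k then PowerSeries.coeff k.toNat (σp u) else 0

/-- The operator `det(σ_{λ_j − j + i})_{1≤i,j≤r}` expanded by the Leibniz rule
(the `σ_k` commute): `∑_π sign(π) σ_{λ_1−1+π(1)} ∘ ⋯ ∘ σ_{λ_r−r+π(r)}` applied to `u`. -/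
def giambelli (σp : ExteriorAlgebra ℚ V →+* PowerSeries (ExteriorAlgebra ℚ V))
    (r : ℕ) (l : Fin r → ℕ) (u : ExteriorAlgebra ℚ V) : ExteriorAlgebra ℚ V :=
  ∑ π : Equiv.Perm (Fin r),
    (Equiv.Perm.sign π : ℤ) •
      ((List.finRange r).foldr
        (fun j f => opOf σp ((l j : ℤ) - (j : ℕ) + ((π j : ℕ))) ∘ f) id) u

/-- `B_r = ℚ[e₁,…,e_r]` with its Schur basis data. -/
abbrev Br (r : ℕ) := MvPolynomial (Fin r) ℚ

def eP (r : ℕ) (i : ℕ) : Br r :=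
  if h : 1 ≤ i ∧ i ≤ r then MvPolynomial.X ⟨i - 1, by omega⟩
  else if i = 0 then 1 else 0

def Er (r : ℕ) : PowerSeries (Br r) := PowerSeries.mk fun n => (-1) ^ n * eP r n

def hP (r : ℕ) (n : ℤ) : Br r :=
  if n < 0 then 0 else PowerSeries.coeff n.toNat (PowerSeries.invOfUnit (Er r) 1)

def Delta (r : ℕ) (l : Fin r → ℕ) : Br r :=
  Matrix.det (Matrix.of fun i j : Fin r =>
    hP r ((l j : ℤ) - ((j : ℕ) + 1) + ((i : ℕ) + 1)))

open ExteriorAlgebra MvPolynomial Finset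

abbrev EA : Type := ExteriorAlgebra ℚ V
abbrev RR (r : ℕ) : Type := MvPolynomial (Fin r) ℚ

/-- wedge of `X^{a 0} ∧ ⋯ ∧ X^{a (r-1)}`. -/
def wv (r : ℕ) (a : Fin r → ℕ) : EA :=
  ExteriorAlgebra.ιMulti ℚ r (fun k => Finsupp.single (a k) 1)

lemma wv_apply (r : ℕ) (a : Fin r → ℕ) :
    wv r a = ((List.finRange r).map fun k => Xp (a k)).prod := by
  rw [wv, ιMulti_apply, List.ofFn_eq_map]; rfl

lemma Xr_eq (r : ℕ) (l : Fin r → ℕ) :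
    Xr r l = wv r (fun k => r - 1 - k.val + l k) := (wv_apply _ _).symm

/-- Submodule spanned by all wedges of powers. -/
def Wsub (r : ℕ) : Submodule ℚ EA := Submodule.span ℚ (Set.range (wv r))

lemma wv_mem (r : ℕ) (a : Fin r → ℕ) : wv r a ∈ Wsub r :=
  Submodule.subset_span ⟨a, rfl⟩

/-- single-variable evaluation: `v ↦ ∑ v_n x_i^n` for each `i`. -/
def phiV (r : ℕ) : V →ₗ[ℚ] (Fin r → RR r) :=
  LinearMap.pi fun i => Finsupp.linearCombination ℚ (fun n : ℕ => (X i : RR r) ^ n)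

lemma phiV_single (r : ℕ) (m : ℕ) :
    phiV r (Finsupp.single m 1) = fun i => (X i : RR r) ^ m := by
  funext i
  simp [phiV, Finsupp.linearCombination_single]

/-- determinant as a ℚ-alternating map on rows. -/
def dA (r : ℕ) : (Fin r → RR r) [⋀^Fin r]→ₗ[ℚ] RR r :=
  { toMultilinearMap :=
      (Matrix.detRowAlternating :
        (Fin r → RR r) [⋀^Fin r]→ₗ[RR r] RR r).toMultilinearMap.restrictScalars ℚ
    map_eq_zero_of_eq' := fun v i j h hij =>
      (Matrix.detRowAlternating : (Fin r → RR r) [⋀^Fin r]→ₗ[RR r] RR r).map_eq_zero_of_eq v h hij }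

def altM (r : ℕ) : V [⋀^Fin r]→ₗ[ℚ] RR r := (dA r).compLinearMap (phiV r)

def Phifam (r : ℕ) : ∀ i : ℕ, V [⋀^Fin i]→ₗ[ℚ] RR r :=
  fun i => if h : i = r then h ▸ altM r else 0

/-- The alternant linear map. -/
def Phi (r : ℕ) : EA →ₗ[ℚ] RR r := ExteriorAlgebra.liftAlternating (Phifam r)

/-- The alternant `det (x_i^{a k})_{k i}` (row `k`, column `i`). -/
def Ap (r : ℕ) (a : Fin r → ℕ) : RR r :=
  Matrix.det (Matrix.of fun k i : Fin r => (X i : RR r) ^ (a k))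

lemma Phi_wv (r : ℕ) (a : Fin r → ℕ) : Phi r (wv r a) = Ap r a := by
  rw [Phi, wv, liftAlternating_apply_ιMulti]
  have : Phifam r r = altM r := by simp [Phifam]
  rw [this]
  show dA r (fun k => phiV r (Finsupp.single (a k) 1)) = _
  have h1 : (fun k => phiV r (Finsupp.single (a k) 1))
      = fun k i => (X i : RR r) ^ (a k) := by
    funext k; exact phiV_single r (a k)
  rw [h1]
  rfl

lemma Ap_eq (r : ℕ) (a : Fin r → ℕ) :
    Ap r a = ∑ π : Equiv.Perm (Fin r),
      (Equiv.Perm.sign π : ℤ) • ∏ i : Fin r, (X i : RR r) ^ (a (π i)) := by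
  rw [Ap, Matrix.det_apply]
  refine Finset.sum_congr rfl fun π _ => ?_
  rw [Units.smul_def]
  rfl

lemma prod_X_pow (r : ℕ) (d : Fin r → ℕ) :
    (∏ i : Fin r, (X i : RR r) ^ (d i)) =
      monomial (Finsupp.equivFunOnFinite.symm d) 1 := by
  rw [MvPolynomial.monomial_eq]
  simp only [map_one, one_mul]
  rw [Finsupp.prod]
  refine (Finset.prod_subset (Finset.subset_univ _) ?_).symm
  intro i _ hi
  have : (Finsupp.equivFunOnFinite.symm d) i = 0 := by
    simpa [Finsupp.mem_support_iff] using hi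
  rw [show (Finsupp.equivFunOnFinite.symm d) i = d i from rfl] at this
  simp [this]



variable {r : ℕ}
-- real content
lemma coeff_prod_X_pow (r : ℕ) (d b : Fin r → ℕ) :
    MvPolynomial.coeff (Finsupp.equivFunOnFinite.symm b)
      (∏ i : Fin r, (X i : RR r) ^ (d i)) = if d = b then 1 else 0 := by
  rw [prod_X_pow, MvPolynomial.coeff_monomial]
  congr 1
  rw [eq_iff_iff, EquivLike.apply_eq_iff_eq]

lemma comp_perm_eq {r : ℕ} {a b : Fin r → ℕ} (ha : StrictAnti a) (hb : StrictAnti b)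
    (π : Equiv.Perm (Fin r)) (h : (fun i => a (π i)) = b) : a = b := by
  have h1 : Monotone ((OrderDual.toDual ∘ a) ∘ π) := by
    intro i j hij
    show OrderDual.toDual (a (π i)) ≤ OrderDual.toDual (a (π j))
    rw [OrderDual.toDual_le_toDual, congrFun h i, congrFun h j]
    exact hb.antitone hij
  have h2 : Monotone ((OrderDual.toDual ∘ a) ∘ (1 : Equiv.Perm (Fin r))) := by
    intro i j hij
    show OrderDual.toDual (a i) ≤ OrderDual.toDual (a j)
    rw [OrderDual.toDual_le_toDual]
    exact ha.antitone hij
  have h3 := Tuple.unique_monotone h1 h2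
  funext i
  have h4 : a (π i) = a i := congrArg OrderDual.ofDual (congrFun h3 i)
  rw [← congrFun h i, h4]

lemma coeff_Ap (r : ℕ) (a b : Fin r → ℕ) (ha : StrictAnti a) (hb : StrictAnti b) :
    MvPolynomial.coeff (Finsupp.equivFunOnFinite.symm b) (Ap r a)
      = if a = b then 1 else 0 := by
  rw [Ap_eq, MvPolynomial.coeff_sum]
  have hcoeff : ∀ π : Equiv.Perm (Fin r),
      MvPolynomial.coeff (Finsupp.equivFunOnFinite.symm b)
        ((Equiv.Perm.sign π : ℤ) • ∏ i : Fin r, (X i : RR r) ^ (a (π i)))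
      = (Equiv.Perm.sign π : ℤ) • (if (fun i => a (π i)) = b then (1:ℚ) else 0) := by
    intro π
    rw [MvPolynomial.coeff_smul, coeff_prod_X_pow]
  simp_rw [hcoeff]
  by_cases hab : a = b
  · subst hab
    rw [if_pos rfl, Finset.sum_eq_single (1 : Equiv.Perm (Fin r))]
    · simp
    · intro π _ hπ
      rw [if_neg, smul_zero]
      intro hc
      apply hπ
      refine Equiv.ext fun i => ?_
      exact ha.injective (congrFun hc i)
    · simp
  · rw [if_neg hab]
    refine Finset.sum_eq_zero fun π _ => ?_
    rw [if_neg (fun hc => hab (comp_perm_eq ha hb π hc)), smul_zero]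

/-- strictAnti b implies b k ≥ r - 1 - k -/
lemma strictAnti_ge {r : ℕ} {b : Fin r → ℕ} (hb : StrictAnti b) (j : Fin r) :
    r - 1 - j.val ≤ b j := by
  have key : ∀ m : ℕ, ∀ h : m < r, m ≤ b (Fin.rev ⟨m, h⟩) := by
    intro m
    induction m with
    | zero => intro h; exact Nat.zero_le _
    | succ n ih =>
      intro h
      have hn : n < r := Nat.lt_of_succ_lt h
      have hlt : Fin.rev (⟨n+1, h⟩ : Fin r) < Fin.rev ⟨n, hn⟩ := by
        rw [Fin.rev_lt_rev]; exact Nat.lt_succ_self n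
      have h2 := hb hlt
      have h3 := ih hn
      have e1 := Fin.val_rev (⟨n+1, h⟩ : Fin r)
      have e2 := Fin.val_rev (⟨n, hn⟩ : Fin r)
      omega
  have hj : r - 1 - j.val < r := by have := j.isLt; omega
  have := key (r - 1 - j.val) hj
  have hrev : Fin.rev (⟨r - 1 - j.val, hj⟩ : Fin r) = j := by
    ext; simp [Fin.rev]; have := j.isLt; omega
  rwa [hrev] at this

/-- `∏_{i∈S} (1 - x_i z)`. -/
def EEs (r : ℕ) (S : Finset (Fin r)) : PowerSeries (RR r) :=
  ∏ i ∈ S, (1 - PowerSeries.C (X i) * PowerSeries.X)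

/-- `∏_{i∈S} (1 - x_i z)⁻¹`. -/
def GSs (r : ℕ) (S : Finset (Fin r)) : PowerSeries (RR r) :=
  ∏ i ∈ S, PowerSeries.mk (fun n => (X i : RR r) ^ n)

lemma geom_mul (r : ℕ) (t : Fin r) :
    (1 - PowerSeries.C (X t) * PowerSeries.X) *
      PowerSeries.mk (fun n => (X t : RR r) ^ n) = 1 := by
  refine PowerSeries.ext fun n => ?_
  rw [sub_mul, one_mul, map_sub, mul_assoc, PowerSeries.coeff_C_mul, PowerSeries.coeff_mk,
    PowerSeries.coeff_one]
  cases n with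
  | zero => simp
  | succ n =>
    rw [PowerSeries.coeff_succ_X_mul, PowerSeries.coeff_mk]
    simp [pow_succ, mul_comm]

lemma EEs_mul_GSs (r : ℕ) (S : Finset (Fin r)) : EEs r S * GSs r S = 1 := by
  rw [EEs, GSs, ← Finset.prod_mul_distrib]
  exact Finset.prod_eq_one fun t _ => geom_mul r t

lemma coeff_EEs (r : ℕ) (S : Finset (Fin r)) (n : ℕ) :
    PowerSeries.coeff n (EEs r S) =
      (-1) ^ n * ∑ T ∈ powersetCard n S, ∏ i ∈ T, (X i : RR r) := by
  induction S using Finset.induction_on generalizing n with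
  | empty =>
    rw [EEs, Finset.prod_empty, PowerSeries.coeff_one]
    cases n with
    | zero => simp
    | succ n =>
      rw [if_neg (Nat.succ_ne_zero n), Finset.powersetCard_eq_empty.2 (by simp)]
      simp
  | @insert a S ha ih =>
    rw [EEs, Finset.prod_insert ha, sub_mul, one_mul, map_sub, mul_assoc,
      PowerSeries.coeff_C_mul]
    rw [show (∏ i ∈ S, (1 - PowerSeries.C (X i) * PowerSeries.X)) = EEs r S from rfl]
    cases n with
    | zero =>
      rw [PowerSeries.coeff_zero_X_mul, ih 0]
      simp
    | succ n =>
      rw [PowerSeries.coeff_succ_X_mul, ih (n+1), ih n,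
        Finset.powersetCard_succ_insert ha]
      rw [Finset.sum_union, Finset.sum_image]
      · rw [mul_add]
        have h1 : ∀ T ∈ powersetCard n S, (∏ i ∈ insert a T, (X i : RR r)) =
            X a * ∏ i ∈ T, X i := by
          intro T hT
          have haT : a ∉ T := fun h => ha ((Finset.mem_powersetCard.1 hT).1 h)
          rw [Finset.prod_insert haT]
        rw [Finset.sum_congr rfl h1, ← Finset.mul_sum]
        ring
      · intro T hT T' hT' h
        have haT : a ∉ T := fun h => ha ((Finset.mem_powersetCard.1 hT).1 h)
        have haT' : a ∉ T' := fun h => ha ((Finset.mem_powersetCard.1 hT').1 h)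
        rw [← Finset.erase_insert haT, ← Finset.erase_insert haT', h]
      · rw [Finset.disjoint_right]
        intro T hTimg hTS
        obtain ⟨T', hT', rfl⟩ := Finset.mem_image.1 hTimg
        exact ha ((Finset.mem_powersetCard.1 hTS).1 (Finset.mem_insert_self a T'))

/-- `h_m`, extended by zero to negative integers. -/
def hxz (r : ℕ) (m : ℤ) : RR r :=
  if m < 0 then 0 else PowerSeries.coeff m.toNat (GSs r Finset.univ)

lemma hxz_neg {m : ℤ} (hm : m < 0) : hxz r m = 0 := if_pos hm

lemma hxz_natCast (k : ℕ) : hxz r k = PowerSeries.coeff k (GSs r Finset.univ) := by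
  simp [hxz]

lemma hxz_zero : hxz r 0 = 1 := by
  rw [show (0:ℤ) = ((0:ℕ):ℤ) from rfl, hxz_natCast, PowerSeries.coeff_zero_eq_constantCoeff,
    GSs, map_prod]
  refine Finset.prod_eq_one fun t _ => ?_
  rw [PowerSeries.constantCoeff_mk]
  exact pow_zero _

def cEt (r : ℕ) (t : Fin r) (k : ℕ) : RR r :=
  PowerSeries.coeff k (EEs r (Finset.univ.erase t))

lemma cEt_ge {t : Fin r} {k : ℕ} (hk : r ≤ k) : cEt r t k = 0 := by
  rw [cEt, coeff_EEs]
  rw [Finset.powersetCard_eq_empty.2]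
  · simp
  · rw [Finset.card_erase_of_mem (Finset.mem_univ t), Finset.card_univ, Fintype.card_fin]
    have : 0 < r := t.pos
    omega

lemma EEs_erase_mul (t : Fin r) :
    EEs r (Finset.univ.erase t) * GSs r Finset.univ =
      PowerSeries.mk (fun n => (X t : RR r) ^ n) := by
  have hu : IsUnit (1 - PowerSeries.C (X t) * PowerSeries.X : PowerSeries (RR r)) :=
    IsUnit.of_mul_eq_one _ (geom_mul r t)
  refine hu.mul_left_cancel ?_
  have h2 : (1 - PowerSeries.C (X t) * PowerSeries.X) * EEs r (Finset.univ.erase t)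
      = EEs r Finset.univ :=
    Finset.mul_prod_erase Finset.univ
      (fun i : Fin r => 1 - PowerSeries.C (X i) * PowerSeries.X) (Finset.mem_univ t)
  rw [← mul_assoc, h2, EEs_mul_GSs, geom_mul]

lemma key_t (t : Fin r) (m : ℕ) :
    ∑ i : Fin r, cEt r t i.val * hxz r ((m : ℤ) - i.val) = (X t : RR r) ^ m := by
  have h0 := congrArg (PowerSeries.coeff m) (EEs_erase_mul t)
  rw [PowerSeries.coeff_mul, PowerSeries.coeff_mk,
    Finset.Nat.sum_antidiagonal_eq_sum_range_succ_mk] at h0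
  set F : ℕ → RR r := fun k => cEt r t k * hxz r ((m : ℤ) - k) with hF
  have h1 : ∑ p ∈ Finset.range (m+1),
      PowerSeries.coeff p (EEs r (Finset.univ.erase t)) *
        PowerSeries.coeff (m - p) (GSs r Finset.univ) = ∑ p ∈ Finset.range (m+1), F p := by
    refine Finset.sum_congr rfl fun p hp => ?_
    have hpm : p ≤ m := Nat.lt_succ_iff.1 (Finset.mem_range.1 hp)
    simp only [hF]
    have h2 : ((m : ℤ) - p) = ((m - p : ℕ) : ℤ) := by omega
    rw [h2, hxz_natCast]
    rfl
  rw [h1] at h0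
  have hext : ∀ N, m + 1 ≤ N → ∑ p ∈ Finset.range (m+1), F p = ∑ p ∈ Finset.range N, F p := by
    intro N hN
    refine Finset.sum_subset (Finset.range_subset_range.2 hN) fun p _ hp => ?_
    have hpm : m < p := by simpa using Nat.lt_of_succ_le (Nat.not_lt.1 (by simpa using hp))
    simp only [hF]
    have h2 : ((m:ℤ) - p) < 0 := by omega
    rw [hxz_neg h2, mul_zero]
  have hext2 : ∀ N, r ≤ N → ∑ p ∈ Finset.range r, F p = ∑ p ∈ Finset.range N, F p := by
    intro N hN
    refine Finset.sum_subset (Finset.range_subset_range.2 hN) fun p _ hp => ?_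
    have hpr : r ≤ p := Nat.not_lt.1 (by simpa using hp)
    simp only [hF]
    rw [cEt_ge hpr, zero_mul]
  have hq : ∑ p ∈ Finset.range r, F p = ∑ p ∈ Finset.range (m+1), F p := by
    rw [hext (max (m+1) r) (le_max_left _ _), hext2 (max (m+1) r) (le_max_right _ _)]
  rw [Fin.sum_univ_eq_sum_range (fun i => F i), hq, h0]
-- ===== chunk 4 : Jacobi-Trudi =====

def aevalE (r : ℕ) : Br r →ₐ[ℚ] RR r :=
  aeval (fun i : Fin r => esymm (Fin r) ℚ (i.val + 1))

lemma esymm_gt {n : ℕ} (hn : r < n) : esymm (Fin r) ℚ n = 0 := by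
  rw [esymm, Finset.powersetCard_eq_empty.2 (by simpa using hn), Finset.sum_empty]

lemma aevalE_eP (n : ℕ) : aevalE r (eP r n) = esymm (Fin r) ℚ n := by
  unfold eP
  split_ifs with h1 h2
  · rw [aevalE, aeval_X]
    congr 1
    show (n - 1) + 1 = n
    omega
  · subst h2; rw [map_one, esymm_zero]
  · rw [map_zero, esymm_gt (by omega)]

lemma map_Er : PowerSeries.map (aevalE r).toRingHom (Er r) = EEs r Finset.univ := by
  apply PowerSeries.ext
  intro n
  rw [PowerSeries.coeff_map, Er, PowerSeries.coeff_mk]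
  show aevalE r ((-1) ^ n * eP r n) = _
  rw [map_mul, map_pow, map_neg, map_one, aevalE_eP, coeff_EEs, esymm]

lemma constantCoeff_Er : PowerSeries.constantCoeff (Er r) = 1 := by
  have : PowerSeries.constantCoeff (Er r) = (-1)^0 * eP r 0 := rfl
  rw [this]
  simp [eP]

lemma map_invEr :
    PowerSeries.map (aevalE r).toRingHom (PowerSeries.invOfUnit (Er r) 1)
      = GSs r Finset.univ := by
  have h1 : EEs r Finset.univ *
      PowerSeries.map (aevalE r).toRingHom (PowerSeries.invOfUnit (Er r) 1) = 1 := by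
    rw [← map_Er, ← map_mul, PowerSeries.mul_invOfUnit _ _ (by rw [constantCoeff_Er]; rfl),
      map_one]
  calc PowerSeries.map (aevalE r).toRingHom (PowerSeries.invOfUnit (Er r) 1)
      = (EEs r Finset.univ * GSs r Finset.univ) *
          PowerSeries.map (aevalE r).toRingHom (PowerSeries.invOfUnit (Er r) 1) := by
        rw [EEs_mul_GSs, one_mul]
    _ = GSs r Finset.univ * (EEs r Finset.univ *
          PowerSeries.map (aevalE r).toRingHom (PowerSeries.invOfUnit (Er r) 1)) := by ring
    _ = GSs r Finset.univ := by rw [h1, mul_one]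

lemma map_hP (m : ℤ) : aevalE r (hP r m) = hxz r m := by
  by_cases hm : m < 0
  · rw [hP, if_pos hm, hxz_neg hm, map_zero]
  · rw [hP, if_neg hm, hxz, if_neg hm, ← map_invEr, PowerSeries.coeff_map]
    rfl

def Hmat (r : ℕ) (lam : Fin r → ℕ) : Matrix (Fin r) (Fin r) (RR r) :=
  Matrix.of fun j i : Fin r => hxz r ((lam j : ℤ) + i.val - j.val)

def Emat (r : ℕ) : Matrix (Fin r) (Fin r) (RR r) :=
  Matrix.of fun i t : Fin r => cEt r t (r - 1 - i.val)

lemma Hmat_mul_Emat (lam : Fin r → ℕ) :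
    Hmat r lam * Emat r
      = Matrix.of (fun j t : Fin r => (X t : RR r) ^ (r - 1 - j.val + lam j)) := by
  refine Matrix.ext fun j t => ?_
  rw [Matrix.mul_apply]
  have hkey := key_t t (r - 1 - j.val + lam j)
  set m := r - 1 - j.val + lam j with hm
  set f : Fin r → RR r := fun i => cEt r t i.val * hxz r ((m : ℤ) - i.val) with hf
  calc ∑ i : Fin r, Hmat r lam j i * Emat r i t
      = ∑ i : Fin r, f (Fin.revPerm i) := by
        refine Finset.sum_congr rfl fun i _ => ?_
        have hi := i.isLt; have hj := j.isLt
        show hxz r ((lam j : ℤ) + i.val - j.val) * cEt r t (r - 1 - i.val)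
          = cEt r t (Fin.revPerm i).val * hxz r ((m : ℤ) - (Fin.revPerm i).val)
        have hrev : (Fin.revPerm i).val = r - 1 - i.val := by
          show (Fin.rev i).val = r - 1 - i.val
          rw [Fin.val_rev]; omega
        rw [hrev, mul_comm]
        congr 2
        rw [hm]
        omega
    _ = ∑ i : Fin r, f i := Equiv.sum_comp Fin.revPerm f
    _ = (X t : RR r) ^ m := hkey

lemma det_Hmat_zero : Matrix.det (Hmat r (fun _ => 0)) = 1 := by
  have hBT : (Hmat r (fun _ => 0)).BlockTriangular id := by
    intro i j hij
    have hij' : (j : ℕ) < (i : ℕ) := hij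
    show hxz r (((0:ℕ) : ℤ) + j.val - i.val) = 0
    exact hxz_neg (by omega)
  rw [Matrix.det_of_upperTriangular hBT]
  refine Finset.prod_eq_one fun i _ => ?_
  show hxz r (((0:ℕ) : ℤ) + i.val - i.val) = 1
  rw [show (((0:ℕ) : ℤ) + i.val - i.val) = 0 by omega]
  exact hxz_zero

lemma det_Emat : Matrix.det (Emat r) = Ap r (fun j : Fin r => r - 1 - j.val) := by
  have h := congrArg Matrix.det (Hmat_mul_Emat (fun _ : Fin r => 0))
  rw [Matrix.det_mul, det_Hmat_zero, one_mul] at h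
  rw [h]
  rfl

lemma Ap_JT (lam : Fin r → ℕ) :
    Ap r (fun j => r - 1 - j.val + lam j)
      = Matrix.det (Hmat r lam) * Ap r (fun j : Fin r => r - 1 - j.val) := by
  rw [← det_Emat, ← Matrix.det_mul, Hmat_mul_Emat]
  rfl

lemma aevalE_Delta (lam : Fin r → ℕ) :
    aevalE r (Delta r lam) = Matrix.det (Hmat r lam) := by
  rw [Delta, ← Matrix.det_transpose (Hmat r lam), AlgHom.map_det]
  congr 1
  refine Matrix.ext fun i j => ?_
  show aevalE r (hP r ((lam j : ℤ) - (j.val + 1) + (i.val + 1))) = Hmat r lam j i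
  rw [map_hP]
  show hxz r _ = hxz r _
  congr 1
  ring

theorem JT_full (lam : Fin r → ℕ) :
    Ap r (fun j => r - 1 - j.val + lam j)
      = aevalE r (Delta r lam) * Ap r (fun j : Fin r => r - 1 - j.val) := by
  rw [aevalE_Delta, Ap_JT]
-- ===== chunk 5 : multiplication rules for alternants =====

lemma sum_comp_perm {M : Type*} [AddCommMonoid M] (π : Equiv.Perm (Fin r))
    (F : (Fin r → ℕ) → M) (k : ℕ) :
    ∑ c ∈ Finset.Nat.antidiagonalTuple r k, F (fun i => c (π i))
      = ∑ c ∈ Finset.Nat.antidiagonalTuple r k, F c := by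
  refine Finset.sum_nbij' (fun c => fun i => c (π i)) (fun c => fun i => c (π.symm i))
    ?_ ?_ ?_ ?_ ?_
  · intro c hc
    rw [Finset.Nat.mem_antidiagonalTuple] at hc ⊢
    rw [Equiv.sum_comp π c]; exact hc
  · intro c hc
    rw [Finset.Nat.mem_antidiagonalTuple] at hc ⊢
    rw [Equiv.sum_comp π.symm c]; exact hc
  · intro c _; funext i; simp
  · intro c _; funext i; simp
  · intro c _; rfl

lemma Hk_eq (k : ℕ) :
    (∑ c ∈ Finset.Nat.antidiagonalTuple r k, ∏ i : Fin r, (X i : RR r) ^ (c i))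
      = hxz r (k : ℤ) := by
  rw [hxz_natCast, GSs, PowerSeries.coeff_prod]
  refine Finset.sum_nbij' (fun c => Finsupp.equivFunOnFinite.symm c) (fun l => ⇑l)
    ?_ ?_ ?_ ?_ ?_
  · intro c hc
    rw [Finset.Nat.mem_antidiagonalTuple] at hc
    rw [Finset.mem_finsuppAntidiag]
    exact ⟨hc, Finset.subset_univ _⟩
  · intro l hl
    rw [Finset.mem_finsuppAntidiag] at hl
    rw [Finset.Nat.mem_antidiagonalTuple]
    exact hl.1
  · intro c _; rfl
  · intro l _; simp
  · intro c _
    refine Finset.prod_congr rfl fun i _ => ?_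
    rw [PowerSeries.coeff_mk]
    rfl

lemma sum_Ap_h (k : ℕ) (a : Fin r → ℕ) :
    ∑ c ∈ Finset.Nat.antidiagonalTuple r k, Ap r (fun j => a j + c j)
      = hxz r (k : ℤ) * Ap r a := by
  simp only [Ap_eq]
  rw [Finset.sum_comm]
  have inner : ∀ π : Equiv.Perm (Fin r),
      ∑ c ∈ Finset.Nat.antidiagonalTuple r k,
        ∏ i : Fin r, (X i : RR r) ^ (a (π i) + c (π i))
      = (∏ i : Fin r, (X i : RR r) ^ (a (π i))) * hxz r (k : ℤ) := by
    intro π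
    rw [sum_comp_perm π (fun d => ∏ i : Fin r, (X i : RR r) ^ (a (π i) + d i)) k]
    have h2 : ∀ c : Fin r → ℕ,
        (∏ i : Fin r, (X i : RR r) ^ (a (π i) + c i))
        = (∏ i : Fin r, (X i : RR r) ^ (a (π i))) * ∏ i : Fin r, (X i : RR r) ^ (c i) := by
      intro c
      rw [← Finset.prod_mul_distrib]
      exact Finset.prod_congr rfl fun i _ => pow_add _ _ _
    rw [Finset.sum_congr rfl fun c _ => h2 c, ← Finset.mul_sum, Hk_eq]
  calc ∑ π : Equiv.Perm (Fin r), ∑ c ∈ Finset.Nat.antidiagonalTuple r k,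
        (Equiv.Perm.sign π : ℤ) • ∏ i : Fin r, (X i : RR r) ^ (a (π i) + c (π i))
      = ∑ π : Equiv.Perm (Fin r), (Equiv.Perm.sign π : ℤ) •
          ((∏ i : Fin r, (X i : RR r) ^ (a (π i))) * hxz r (k : ℤ)) := by
        refine Finset.sum_congr rfl fun π _ => ?_
        rw [← Finset.smul_sum, inner π]
    _ = (∑ π : Equiv.Perm (Fin r), (Equiv.Perm.sign π : ℤ) •
          ∏ i : Fin r, (X i : RR r) ^ (a (π i))) * hxz r (k : ℤ) := by
        rw [Finset.sum_mul]
        exact Finset.sum_congr rfl fun π _ => (smul_mul_assoc _ _ _).symm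
    _ = hxz r (k : ℤ) * ∑ π : Equiv.Perm (Fin r), (Equiv.Perm.sign π : ℤ) •
          ∏ i : Fin r, (X i : RR r) ^ (a (π i)) := mul_comm _ _

lemma sum_comp_perm_pc {M : Type*} [AddCommMonoid M] (π : Equiv.Perm (Fin r))
    (F : Finset (Fin r) → M) (k : ℕ) :
    ∑ T ∈ Finset.powersetCard k Finset.univ, F (T.image π)
      = ∑ T ∈ Finset.powersetCard k Finset.univ, F T := by
  refine Finset.sum_nbij' (fun T => T.image π) (fun T => T.image π.symm)
    ?_ ?_ ?_ ?_ ?_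
  · intro T hT
    rw [Finset.mem_powersetCard] at hT ⊢
    exact ⟨Finset.subset_univ _, by rw [Finset.card_image_of_injective _ π.injective]; exact hT.2⟩
  · intro T hT
    rw [Finset.mem_powersetCard] at hT ⊢
    exact ⟨Finset.subset_univ _,
      by rw [Finset.card_image_of_injective _ π.symm.injective]; exact hT.2⟩
  · intro T _; simp [Finset.image_image]
  · intro T _; simp [Finset.image_image]
  · intro T _; rfl

lemma ind_prod (S : Finset (Fin r)) :
    (∏ i : Fin r, (X i : RR r) ^ (if i ∈ S then 1 else 0)) = ∏ i ∈ S, (X i : RR r) := by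
  have h1 : (∏ i : Fin r, (X i : RR r) ^ (if i ∈ S then 1 else 0))
      = ∏ i : Fin r, (if i ∈ S then (X i : RR r) else 1) := by
    refine Finset.prod_congr rfl fun i _ => ?_
    split_ifs <;> simp
  rw [h1, Finset.prod_ite_mem Finset.univ S (fun i => (X i : RR r)), Finset.univ_inter]

lemma esymm_mul_Ap (k : ℕ) (a : Fin r → ℕ) :
    esymm (Fin r) ℚ k * Ap r a
      = ∑ T ∈ Finset.powersetCard k Finset.univ,
          Ap r (fun j => a j + if j ∈ T then 1 else 0) := by
  simp only [Ap_eq]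
  rw [Finset.sum_comm]
  have inner : ∀ π : Equiv.Perm (Fin r),
      ∑ T ∈ Finset.powersetCard k Finset.univ,
        ∏ i : Fin r, (X i : RR r) ^ (a (π i) + if π i ∈ T then 1 else 0)
      = (∏ i : Fin r, (X i : RR r) ^ (a (π i))) * esymm (Fin r) ℚ k := by
    intro π
    have hrw : ∀ T : Finset (Fin r),
        (∏ i : Fin r, (X i : RR r) ^ (a (π i) + if π i ∈ T then 1 else 0))
        = (fun S => ∏ i : Fin r, (X i : RR r) ^ (a (π i) + if i ∈ S then 1 else 0))
            (T.image π.symm) := by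
      intro T
      show _ = ∏ i : Fin r, (X i : RR r) ^ (a (π i) + if i ∈ T.image π.symm then 1 else 0)
      refine Finset.prod_congr rfl fun i _ => ?_
      have : (i ∈ T.image π.symm) = (π i ∈ T) := by
        refine propext ⟨fun h => ?_, fun h => ?_⟩
        · obtain ⟨x, hx, rfl⟩ := Finset.mem_image.1 h
          simpa using hx
        · exact Finset.mem_image.2 ⟨π i, h, by simp⟩
      simp only [this]
    rw [Finset.sum_congr rfl fun T _ => hrw T,
      sum_comp_perm_pc π.symm
        (fun S => ∏ i : Fin r, (X i : RR r) ^ (a (π i) + if i ∈ S then 1 else 0)) k]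
    have h2 : ∀ S : Finset (Fin r),
        (∏ i : Fin r, (X i : RR r) ^ (a (π i) + if i ∈ S then 1 else 0))
        = (∏ i : Fin r, (X i : RR r) ^ (a (π i))) * ∏ i ∈ S, (X i : RR r) := by
      intro S
      rw [← ind_prod S, ← Finset.prod_mul_distrib]
      exact Finset.prod_congr rfl fun i _ => pow_add _ _ _
    rw [Finset.sum_congr rfl fun S _ => h2 S, ← Finset.mul_sum, esymm]
  calc esymm (Fin r) ℚ k * ∑ π : Equiv.Perm (Fin r), (Equiv.Perm.sign π : ℤ) •
          ∏ i : Fin r, (X i : RR r) ^ (a (π i))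
      = ∑ π : Equiv.Perm (Fin r), (Equiv.Perm.sign π : ℤ) •
          ((∏ i : Fin r, (X i : RR r) ^ (a (π i))) * esymm (Fin r) ℚ k) := by
        rw [Finset.mul_sum]
        refine Finset.sum_congr rfl fun π _ => ?_
        rw [mul_smul_comm, mul_comm]
    _ = ∑ π : Equiv.Perm (Fin r), ∑ T ∈ Finset.powersetCard k Finset.univ,
          (Equiv.Perm.sign π : ℤ) •
            ∏ i : Fin r, (X i : RR r) ^ (a (π i) + if π i ∈ T then 1 else 0) := by
        refine Finset.sum_congr rfl fun π _ => ?_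
        rw [← inner π, Finset.smul_sum]
-- ===== chunk 6 : the Schubert derivation side =====

lemma sum_adT_succ {M : Type*} [AddCommMonoid M] (n k : ℕ) (g : (Fin (n+1) → ℕ) → M) :
    ∑ c ∈ Finset.Nat.antidiagonalTuple (n+1) k, g c
      = ∑ p ∈ Finset.HasAntidiagonal.antidiagonal k, ∑ c ∈ Finset.Nat.antidiagonalTuple n p.2,
          g (Fin.cons p.1 c) := by
  rw [Finset.sum_sigma']
  refine (Finset.sum_nbij' (fun x => Fin.cons x.1.1 x.2)
    (fun c => ⟨(c 0, ∑ i : Fin n, Fin.tail c i), Fin.tail c⟩) ?_ ?_ ?_ ?_ ?_).symm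
  · intro x hx
    rw [Finset.mem_sigma] at hx
    have h1 := Finset.HasAntidiagonal.mem_antidiagonal.1 hx.1
    have h2 := Finset.Nat.mem_antidiagonalTuple.1 hx.2
    rw [Finset.Nat.mem_antidiagonalTuple, Fin.sum_cons]
    omega
  · intro c hc
    rw [Finset.Nat.mem_antidiagonalTuple] at hc
    rw [Finset.mem_sigma, Finset.HasAntidiagonal.mem_antidiagonal, Finset.Nat.mem_antidiagonalTuple]
    constructor
    · rw [Fin.sum_univ_succ] at hc
      simpa [Fin.tail] using hc
    · rfl
  · intro x hx
    rw [Finset.mem_sigma] at hx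
    have h2 := hx.2
    rw [Finset.Nat.mem_antidiagonalTuple] at h2
    obtain ⟨⟨p1, p2⟩, c⟩ := x
    simp only [Fin.cons_zero, Fin.tail_cons]
    congr 1
    simp only at h2
    rw [show (∑ i : Fin n, c i) = p2 from h2]
  · intro c _
    exact Fin.cons_self_tail c
  · intro x _
    rfl

variable (σp : ExteriorAlgebra ℚ V →+* PowerSeries (ExteriorAlgebra ℚ V))

lemma wv_ofFn (a : Fin r → ℕ) : wv r a = (List.ofFn fun i => Xp (a i)).prod := by
  rw [wv_apply, List.ofFn_eq_map]

lemma sigma_w (hσp : ∀ j, σp (Xp j) = PowerSeries.mk fun i => Xp (j + i)) :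
    ∀ (n : ℕ) (a : Fin n → ℕ),
    σp ((List.ofFn fun i => Xp (a i)).prod)
      = PowerSeries.mk fun k => ∑ c ∈ Finset.Nat.antidiagonalTuple n k,
          (List.ofFn fun i => Xp (a i + c i)).prod := by
  intro n
  induction n with
  | zero =>
    intro a
    rw [List.ofFn_zero, List.prod_nil, map_one]
    apply PowerSeries.ext
    intro k
    rw [PowerSeries.coeff_mk, PowerSeries.coeff_one]
    cases k with
    | zero => simp
    | succ k => simp
  | succ n ih =>
    intro a
    rw [List.ofFn_succ, List.prod_cons, map_mul, hσp, ih (fun i => a i.succ)]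
    apply PowerSeries.ext
    intro k
    rw [PowerSeries.coeff_mul, PowerSeries.coeff_mk, sum_adT_succ n k]
    refine Finset.sum_congr rfl fun p hp => ?_
    rw [PowerSeries.coeff_mk, PowerSeries.coeff_mk, Finset.mul_sum]
    refine Finset.sum_congr rfl fun c _ => ?_
    congr 1
    rw [List.ofFn_succ, List.prod_cons]
    simp [Fin.cons_zero, Fin.cons_succ]

lemma opOf_wv_nat (hσp : ∀ j, σp (Xp j) = PowerSeries.mk fun i => Xp (j + i))
    (k : ℕ) (a : Fin r → ℕ) :
    opOf σp (k : ℤ) (wv r a)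
      = ∑ c ∈ Finset.Nat.antidiagonalTuple r k, wv r (fun j => a j + c j) := by
  rw [opOf]
  rw [dif_pos (by positivity)]
  rw [wv_ofFn, sigma_w σp hσp r a, Int.toNat_natCast, PowerSeries.coeff_mk]
  exact Finset.sum_congr rfl fun c _ => (wv_ofFn _).symm

lemma opOf_neg {m : ℤ} (hm : ¬ 0 ≤ m) (u : EA) : opOf σp m u = 0 := dif_neg hm

lemma opOf_add (m : ℤ) (u v : EA) :
    opOf σp m (u + v) = opOf σp m u + opOf σp m v := by
  unfold opOf
  split_ifs with h
  · rw [map_add, map_add]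
  · rw [add_zero]

lemma opOf_smul (m : ℤ) (q : ℚ) (u : EA) :
    opOf σp m (q • u) = q • opOf σp m u := by
  unfold opOf
  split_ifs with h
  · have h1 : σp (q • u) = q • σp u := map_rat_smul σp.toAddMonoidHom q u
    rw [h1, PowerSeries.coeff_smul]
  · rw [smul_zero]

lemma opOf_mem (hσp : ∀ j, σp (Xp j) = PowerSeries.mk fun i => Xp (j + i))
    (m : ℤ) : ∀ u ∈ Wsub r, opOf σp m u ∈ Wsub r := by
  intro u hu
  induction hu using Submodule.span_induction with
  | mem x hx =>
    obtain ⟨a, rfl⟩ := hx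
    by_cases h : 0 ≤ m
    · obtain ⟨k, rfl⟩ := Int.eq_ofNat_of_zero_le h
      rw [opOf_wv_nat σp hσp]
      exact Submodule.sum_mem _ fun c _ => wv_mem r _
    · rw [opOf_neg σp h]
      exact Submodule.zero_mem _
  | zero =>
    have h0 : opOf σp m (0:EA) = 0 := by
      have := opOf_smul σp m 0 0
      simpa using this
    rw [h0]
    exact Submodule.zero_mem _
  | add x y _ _ hx hy => rw [opOf_add]; exact Submodule.add_mem _ hx hy
  | smul q x _ hx => rw [opOf_smul]; exact Submodule.smul_mem _ _ hx

lemma Phi_opOf (hσp : ∀ j, σp (Xp j) = PowerSeries.mk fun i => Xp (j + i))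
    (m : ℤ) : ∀ u ∈ Wsub r, Phi r (opOf σp m u) = hxz r m * Phi r u := by
  intro u hu
  induction hu using Submodule.span_induction with
  | mem x hx =>
    obtain ⟨a, rfl⟩ := hx
    by_cases h : 0 ≤ m
    · obtain ⟨k, rfl⟩ := Int.eq_ofNat_of_zero_le h
      rw [opOf_wv_nat σp hσp, map_sum]
      rw [Finset.sum_congr rfl fun c _ => Phi_wv r _, sum_Ap_h, Phi_wv]
    · rw [opOf_neg σp h, hxz_neg (by omega), map_zero, zero_mul]
  | zero =>
    have h0 : opOf σp m (0:EA) = 0 := by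
      have : opOf σp m ((0:ℚ) • (0:EA)) = (0:ℚ) • opOf σp m 0 := opOf_smul σp m 0 0
      simpa using this
    rw [h0, map_zero, mul_zero]
  | add x y _ _ hx hy => rw [opOf_add, map_add, hx, hy, map_add, mul_add]
  | smul q x _ hx => rw [opOf_smul, map_smul, hx, map_smul, mul_smul_comm]

lemma foldr_fact (hσp : ∀ j, σp (Xp j) = PowerSeries.mk fun i => Xp (j + i))
    (kf : Fin r → ℤ) (L : List (Fin r)) :
    ∀ u ∈ Wsub r,
      (L.foldr (fun j f => opOf σp (kf j) ∘ f) id u ∈ Wsub r) ∧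
      Phi r (L.foldr (fun j f => opOf σp (kf j) ∘ f) id u)
        = (L.map fun j => hxz r (kf j)).prod * Phi r u := by
  induction L with
  | nil => intro u hu; exact ⟨hu, by simp⟩
  | cons j L ih =>
    intro u hu
    obtain ⟨h1, h2⟩ := ih u hu
    have hfold : (j :: L).foldr (fun j f => opOf σp (kf j) ∘ f) id u
        = opOf σp (kf j) (L.foldr (fun j f => opOf σp (kf j) ∘ f) id u) := rfl
    constructor
    · rw [hfold]; exact opOf_mem σp hσp _ _ h1
    · rw [hfold, Phi_opOf σp hσp _ _ h1, h2, List.map_cons, List.prod_cons, mul_assoc]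

/-- `δ` vector -/
def del (r : ℕ) : Fin r → ℕ := fun j => r - 1 - j.val

lemma giambelli_mem (hσp : ∀ j, σp (Xp j) = PowerSeries.mk fun i => Xp (j + i))
    (l : Fin r → ℕ) : giambelli σp r l (wv r (del r)) ∈ Wsub r := by
  refine Submodule.sum_mem _ fun π _ => ?_
  have := (foldr_fact σp hσp (fun j => (l j : ℤ) - (j : ℕ) + ((π j : ℕ)))
    (List.finRange r) (wv r (del r)) (wv_mem r _)).1
  rw [show ((Equiv.Perm.sign π : ℤ) • ((List.finRange r).foldr
        (fun j f => opOf σp ((l j : ℤ) - (j : ℕ) + ((π j : ℕ))) ∘ f) id) (wv r (del r)))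
    = ((Equiv.Perm.sign π : ℤ) : ℚ) • ((List.finRange r).foldr
        (fun j f => opOf σp ((l j : ℤ) - (j : ℕ) + ((π j : ℕ))) ∘ f) id) (wv r (del r))
    from (Int.cast_smul_eq_zsmul ℚ _ _).symm]
  exact Submodule.smul_mem _ _ this

lemma Phi_giambelli (hσp : ∀ j, σp (Xp j) = PowerSeries.mk fun i => Xp (j + i))
    (l : Fin r → ℕ) :
    Phi r (giambelli σp r l (wv r (del r)))
      = aevalE r (Delta r l) * Ap r (del r) := by
  rw [giambelli, map_sum]
  have hterm : ∀ π : Equiv.Perm (Fin r),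
      Phi r ((Equiv.Perm.sign π : ℤ) • ((List.finRange r).foldr
        (fun j f => opOf σp ((l j : ℤ) - (j : ℕ) + ((π j : ℕ))) ∘ f) id) (wv r (del r)))
      = (Equiv.Perm.sign π : ℤ) •
          ((∏ j : Fin r, hxz r ((l j : ℤ) - (j : ℕ) + ((π j : ℕ)))) * Ap r (del r)) := by
    intro π
    rw [map_zsmul]
    congr 1
    rw [(foldr_fact σp hσp (fun j => (l j : ℤ) - (j : ℕ) + ((π j : ℕ)))
      (List.finRange r) (wv r (del r)) (wv_mem r _)).2, Phi_wv,
      ← List.ofFn_eq_map, List.prod_ofFn]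
  rw [Finset.sum_congr rfl fun π _ => hterm π]
  have hdet : (∑ π : Equiv.Perm (Fin r), (Equiv.Perm.sign π : ℤ) •
      ((∏ j : Fin r, hxz r ((l j : ℤ) - (j : ℕ) + ((π j : ℕ)))) * Ap r (del r)))
      = (Matrix.det (Matrix.of fun i j : Fin r => hxz r ((l j : ℤ) - (j : ℕ) + (i : ℕ))))
          * Ap r (del r) := by
    rw [Matrix.det_apply, Finset.sum_mul]
    refine Finset.sum_congr rfl fun π _ => ?_
    rw [Units.smul_def, smul_mul_assoc]
    rfl
  rw [hdet, aevalE_Delta]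
  have hT : (Matrix.of fun i j : Fin r => hxz r ((l j : ℤ) - (j : ℕ) + (i : ℕ)))
      = (Hmat r l).transpose := by
    refine Matrix.ext fun i j => ?_
    show hxz r ((l j : ℤ) - (j : ℕ) + (i : ℕ)) = hxz r ((l j : ℤ) + (i : ℕ) - (j : ℕ))
    congr 1
    ring
  rw [hT, Matrix.det_transpose]
-- ===== chunk 7 : injectivity of Phi on Wsub, spanning =====

lemma wv_perm (a : Fin r → ℕ) (π : Equiv.Perm (Fin r)) :
    wv r (fun k => a (π k)) = Equiv.Perm.sign π • wv r a :=
  AlternatingMap.map_perm (ExteriorAlgebra.ιMulti ℚ r) (fun k => Finsupp.single (a k) 1) π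

lemma wv_zero_of_not_inj {a : Fin r → ℕ} (h : ¬ Function.Injective a) : wv r a = 0 := by
  simp only [Function.Injective, not_forall] at h
  obtain ⟨i, j, hij, hne⟩ := h
  exact AlternatingMap.map_eq_zero_of_eq _ _ (by rw [hij]) hne

lemma wv_mem_span_SD (a : Fin r → ℕ) :
    wv r a ∈ Submodule.span ℚ
      (Set.range fun b : {b : Fin r → ℕ // StrictAnti b} => wv r b.val) := by
  by_cases hinj : Function.Injective a
  · set τ : Equiv.Perm (Fin r) := Fin.revPerm.trans (Tuple.sort a) with hτ
    have hmono : Monotone (a ∘ Tuple.sort a) := Tuple.monotone_sort a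
    have hsm : StrictMono (a ∘ Tuple.sort a) :=
      hmono.strictMono_of_injective (hinj.comp (Tuple.sort a).injective)
    have hanti : StrictAnti (fun k => a (τ k)) := by
      intro i j hij
      have : Fin.rev j < Fin.rev i := Fin.rev_lt_rev.2 hij
      exact hsm this
    have hperm := wv_perm a τ
    have hmem : wv r (fun k => a (τ k)) ∈ Submodule.span ℚ
        (Set.range fun b : {b : Fin r → ℕ // StrictAnti b} => wv r b.val) :=
      Submodule.subset_span ⟨⟨fun k => a (τ k), hanti⟩, rfl⟩
    have h2 : wv r a = ((Equiv.Perm.sign τ : ℤ) : ℚ) • wv r (fun k => a (τ k)) := by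
      rw [hperm, Units.smul_def, Int.cast_smul_eq_zsmul, smul_smul]
      rw [show ((Equiv.Perm.sign τ : ℤ) * (Equiv.Perm.sign τ : ℤ)) = 1 by
        rcases Int.units_eq_one_or (Equiv.Perm.sign τ) with h | h <;> rw [h] <;> rfl]
      rw [one_smul]
    rw [h2]
    exact Submodule.smul_mem _ _ hmem
  · rw [wv_zero_of_not_inj hinj]
    exact Submodule.zero_mem _

lemma Wsub_eq_span_SD :
    Wsub r = Submodule.span ℚ
      (Set.range fun b : {b : Fin r → ℕ // StrictAnti b} => wv r b.val) := by
  refine le_antisymm ?_ ?_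
  · rw [Wsub, Submodule.span_le]
    rintro _ ⟨a, rfl⟩
    exact wv_mem_span_SD a
  · rw [Submodule.span_le]
    rintro _ ⟨b, rfl⟩
    exact wv_mem r _

lemma Phi_inj_Wsub : ∀ u ∈ Wsub r, Phi r u = 0 → u = 0 := by
  intro u hu hPhi
  rw [Wsub_eq_span_SD] at hu
  rw [← Finsupp.range_linearCombination, LinearMap.mem_range] at hu
  obtain ⟨c, rfl⟩ := hu
  rw [Finsupp.linearCombination_apply] at hPhi ⊢
  have hc : ∀ b0 ∈ c.support, c b0 = 0 := by
    intro b0 hb0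
    have h2 := congrArg
      (MvPolynomial.coeff (Finsupp.equivFunOnFinite.symm b0.val)) hPhi
    rw [Finsupp.sum, map_sum, MvPolynomial.coeff_sum, MvPolynomial.coeff_zero] at h2
    rw [Finset.sum_eq_single b0] at h2
    · rwa [map_smul, MvPolynomial.coeff_smul, Phi_wv, coeff_Ap r _ _ b0.2 b0.2, if_pos rfl,
        smul_eq_mul, mul_one] at h2
    · intro b _ hbne
      rw [map_smul, MvPolynomial.coeff_smul, Phi_wv, coeff_Ap r _ _ b.2 b0.2,
        if_neg (fun hv => hbne (Subtype.ext hv)), smul_eq_mul, mul_zero]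
    · intro hb0'
      exact absurd hb0 hb0'
  rw [Finsupp.sum]
  refine Finset.sum_eq_zero fun b hb => ?_
  rw [hc b hb, zero_smul]

lemma Wsub_eq_exteriorPower : Wsub r = ⋀[ℚ]^r V := by
  refine le_antisymm ?_ ?_
  · rw [Wsub, Submodule.span_le]
    rintro _ ⟨a, rfl⟩
    exact ExteriorAlgebra.ιMulti_range ℚ r ⟨_, rfl⟩
  · rw [← ExteriorAlgebra.ιMulti_span_fixedDegree, Submodule.span_le]
    rintro _ ⟨v, rfl⟩
    have hv : ∀ j : Fin r, v j = ∑ n ∈ (v j).support, (v j n) • Finsupp.single n 1 := by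
      intro j
      conv_lhs => rw [← Finsupp.sum_single (v j)]
      rw [Finsupp.sum]
      refine Finset.sum_congr rfl fun n _ => ?_
      rw [Finsupp.smul_single, smul_eq_mul, mul_one]
    have h1 : ExteriorAlgebra.ιMulti ℚ r v
        = ∑ p ∈ Fintype.piFinset (fun j => (v j).support),
            ExteriorAlgebra.ιMulti ℚ r (fun j => (v j (p j)) • Finsupp.single (p j) 1) := by
      have hv' : v = fun j => ∑ n ∈ (v j).support, (v j n) • Finsupp.single n 1 := funext hv
      conv_lhs => rw [hv']
      exact MultilinearMap.map_sum_finset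
        (ExteriorAlgebra.ιMulti ℚ r (M := V)).toMultilinearMap
        (A := fun j => (v j).support) (g := fun j n => (v j n) • Finsupp.single n 1)
    rw [h1]
    refine Submodule.sum_mem _ fun p _ => ?_
    have h2 : ExteriorAlgebra.ιMulti ℚ r (fun j => (v j (p j)) • Finsupp.single (p j) 1)
        = (∏ j, v j (p j)) • wv r (fun j => p j) :=
      MultilinearMap.map_smul_univ (ExteriorAlgebra.ιMulti ℚ r (M := V)).toMultilinearMap _ _
    rw [h2]
    exact Submodule.smul_mem _ _ (wv_mem r _)
-- ===== chunk 8 : assembly =====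

lemma aevalE_inj : Function.Injective (aevalE r) := by
  have h := MvPolynomial.esymmAlgHom_injective (σ := Fin r) (R := ℚ) (n := r)
    (by rw [Fintype.card_fin])
  intro p q hpq
  apply h
  apply Subtype.ext
  rw [esymmAlgHom_apply, esymmAlgHom_apply]
  exact hpq

lemma del_strictAnti : StrictAnti (del r) := by
  intro i j hij
  have hi := i.isLt; have hj := j.isLt
  have : i.val < j.val := hij
  show r - 1 - j.val < r - 1 - i.val
  omega

lemma Ap_del_ne : Ap r (del r) ≠ 0 := by
  intro h
  have h2 := coeff_Ap r (del r) (del r) del_strictAnti del_strictAnti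
  rw [h, if_pos rfl, MvPolynomial.coeff_zero] at h2
  exact one_ne_zero h2.symm

def Lmap (r : ℕ) : Br r →ₗ[ℚ] RR r :=
  (LinearMap.mulRight ℚ (Ap r (del r))).comp (aevalE r).toLinearMap

lemma Lmap_apply (p : Br r) : Lmap r p = aevalE r p * Ap r (del r) := rfl

lemma Lmap_inj : Function.Injective (Lmap r) := by
  intro p q h
  rw [Lmap_apply, Lmap_apply] at h
  exact aevalE_inj (mul_right_cancel₀ Ap_del_ne h)

lemma esymm_mul_mem (k : ℕ) :
    ∀ u ∈ Wsub r, esymm (Fin r) ℚ k * Phi r u ∈ (Wsub r).map (Phi r) := by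
  intro u hu
  induction hu using Submodule.span_induction with
  | mem x hx =>
    obtain ⟨a, rfl⟩ := hx
    rw [Phi_wv, esymm_mul_Ap]
    refine ⟨∑ T ∈ Finset.powersetCard k Finset.univ,
      wv r (fun j => a j + if j ∈ T then 1 else 0),
      Submodule.sum_mem _ fun T _ => wv_mem r _, ?_⟩
    rw [map_sum]
    exact Finset.sum_congr rfl fun T _ => Phi_wv r _
  | zero => rw [map_zero, mul_zero]; exact Submodule.zero_mem _
  | add x y _ _ hx hy => rw [map_add, mul_add]; exact Submodule.add_mem _ hx hy
  | smul q x _ hx =>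
    rw [map_smul, mul_smul_comm]
    exact Submodule.smul_mem _ _ hx

lemma range_L_le (p : Br r) : aevalE r p * Ap r (del r) ∈ (Wsub r).map (Phi r) := by
  induction p using MvPolynomial.induction_on with
  | C q =>
    have h1 : aevalE r (MvPolynomial.C q) = MvPolynomial.C q := by
      rw [aevalE, aeval_C]
      rfl
    rw [h1, MvPolynomial.C_mul']
    exact ⟨q • wv r (del r), Submodule.smul_mem _ _ (wv_mem r _),
      by rw [map_smul, Phi_wv]⟩
  | add p q hp hq =>
    rw [map_add, add_mul]
    exact Submodule.add_mem _ hp hq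
  | mul_X p i hp =>
    obtain ⟨u, hu, hPhiu⟩ := hp
    have h1 : aevalE r (p * MvPolynomial.X i) * Ap r (del r)
        = esymm (Fin r) ℚ (i.val + 1) * (aevalE r p * Ap r (del r)) := by
      rw [map_mul, aevalE, aeval_X]
      ring
    rw [h1, ← hPhiu]
    exact esymm_mul_mem _ u hu

lemma range_eq : LinearMap.range (Lmap r) = (Wsub r).map (Phi r) := by
  refine le_antisymm ?_ ?_
  · rintro x ⟨p, rfl⟩
    exact range_L_le p
  · rintro _ ⟨u, hu, rfl⟩
    rw [Wsub_eq_span_SD] at hu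
    induction hu using Submodule.span_induction with
    | mem x hx =>
      obtain ⟨b, rfl⟩ := hx
      rw [Phi_wv]
      set lam : Fin r → ℕ := fun j => b.val j - (r - 1 - j.val) with hlam
      have hfun : (fun j : Fin r => r - 1 - j.val + lam j) = b.val := by
        funext j
        rw [hlam]
        have := strictAnti_ge b.2 j
        show r - 1 - j.val + (b.val j - (r - 1 - j.val)) = b.val j
        omega
      have h2 : Ap r b.val = aevalE r (Delta r lam) * Ap r (del r) := by
        rw [← hfun, JT_full]
        rfl
      rw [h2]
      exact ⟨Delta r lam, rfl⟩
    | zero => rw [map_zero]; exact Submodule.zero_mem _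
    | add x y _ _ hx hy => rw [map_add]; exact Submodule.add_mem _ hx hy
    | smul q x _ hx => rw [map_smul]; exact Submodule.smul_mem _ _ hx

def PhiW (r : ℕ) : Wsub r →ₗ[ℚ] RR r := (Phi r).comp (Wsub r).subtype

lemma PhiW_inj : Function.Injective (PhiW r) := by
  intro u v huv
  apply Subtype.ext
  have hd : (u : EA) - (v : EA) = 0 := by
    refine Phi_inj_Wsub _ (Submodule.sub_mem _ u.2 v.2) ?_
    rw [map_sub]
    rw [show Phi r (u : EA) = PhiW r u from rfl, show Phi r (v : EA) = PhiW r v from rfl, huv,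
      sub_self]
  exact sub_eq_zero.1 hd

lemma range_PhiW : LinearMap.range (PhiW r) = (Wsub r).map (Phi r) := by
  rw [PhiW, LinearMap.range_comp, Submodule.range_subtype]

def eBW (r : ℕ) : Br r ≃ₗ[ℚ] Wsub r :=
  (LinearEquiv.ofInjective (Lmap r) Lmap_inj).trans
    ((LinearEquiv.ofEq _ _ (range_eq.trans range_PhiW.symm)).trans
      (LinearEquiv.ofInjective (PhiW r) PhiW_inj).symm)

lemma Phi_eBW (p : Br r) : Phi r ((eBW r p : Wsub r) : EA) = Lmap r p := by
  have h1 : Phi r ((eBW r p : Wsub r) : EA) = PhiW r (eBW r p) := rfl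
  rw [h1]
  show PhiW r ((LinearEquiv.ofInjective (PhiW r) PhiW_inj).symm
    ((LinearEquiv.ofEq _ _ (range_eq.trans range_PhiW.symm))
      (LinearEquiv.ofInjective (Lmap r) Lmap_inj p))) = Lmap r p
  have h2 : ∀ y : LinearMap.range (PhiW r),
      PhiW r ((LinearEquiv.ofInjective (PhiW r) PhiW_inj).symm y) = (y : RR r) := by
    intro y
    conv_rhs => rw [← LinearEquiv.apply_symm_apply (LinearEquiv.ofInjective (PhiW r) PhiW_inj) y]
    rw [LinearEquiv.ofInjective_apply]
  rw [h2]
  rw [LinearEquiv.coe_ofEq_apply]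
  exact congrArg Subtype.val (rfl : _ = _) |>.trans rfl

/-- Giambelli's formula for Schubert derivations: if `σ₊(z)` is the Hasse–Schmidt
derivation with `σ₊(z)X^j = ∑_{i≥0}X^{j+i}z^i` and `σ₊(z) = ∑ σ_i z^i`, then for every
partition `λ` of length at most `r`, `X^r(λ) = det(σ_{λ_j−j+i})·X^r(0)`.
Consequently `⋀^r V` is a free `B_r`-module of rank `1` generated by
`X^r(0)` (where `h_i` acts as `σ_i`): the map `Δ_λ(H_r) ↦ Δ_λ(σ)X^r(0) = X^r(λ)`
extends to a linear isomorphism `B_r ≃ ⋀^r V`. -/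
theorem giambelli_formula (r : ℕ)
    (σp : ExteriorAlgebra ℚ V →+* PowerSeries (ExteriorAlgebra ℚ V))
    (hσp : ∀ j, σp (Xp j) = PowerSeries.mk fun i => Xp (j + i)) :
    (∀ l : Fin r → ℕ, Antitone l →
      Xr r l = giambelli σp r l (Xr r fun _ => 0)) ∧
    (∃ e : Br r ≃ₗ[ℚ] ⋀[ℚ]^r V,
      ∀ l : Fin r → ℕ, Antitone l →
        (e (Delta r l) : ExteriorAlgebra ℚ V) = giambelli σp r l (Xr r fun _ => 0)) := by
  have hX0 : (Xr r fun _ => 0) = wv r (del r) := by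
    rw [Xr_eq]
    rfl
  have hgPhi : ∀ l : Fin r → ℕ, Phi r (giambelli σp r l (Xr r fun _ => 0))
      = aevalE r (Delta r l) * Ap r (del r) := by
    intro l; rw [hX0]; exact Phi_giambelli σp hσp l
  have hgmem : ∀ l : Fin r → ℕ, giambelli σp r l (Xr r fun _ => 0) ∈ Wsub r := by
    intro l; rw [hX0]; exact giambelli_mem σp hσp l
  have hXrPhi : ∀ l : Fin r → ℕ, Phi r (Xr r l) = aevalE r (Delta r l) * Ap r (del r) := by
    intro l
    rw [Xr_eq, Phi_wv]
    exact JT_full l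
  constructor
  · intro l _
    have h1 : Xr r l - giambelli σp r l (Xr r fun _ => 0) = 0 := by
      refine Phi_inj_Wsub _ (Submodule.sub_mem _ ?_ (hgmem l)) ?_
      · rw [Xr_eq]; exact wv_mem r _
      · rw [map_sub, hXrPhi l, hgPhi l, sub_self]
    exact sub_eq_zero.1 h1
  · refine ⟨(eBW r).trans (LinearEquiv.ofEq _ _ Wsub_eq_exteriorPower), fun l _ => ?_⟩
    rw [LinearEquiv.trans_apply]
    have hcoe : ((LinearEquiv.ofEq _ _ (Wsub_eq_exteriorPower (r := r)))
        (eBW r (Delta r l)) : EA) = ((eBW r (Delta r l) : Wsub r) : EA) := by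
      exact congrArg _ rfl
    rw [hcoe]
    have h1 : ((eBW r (Delta r l) : Wsub r) : EA)
        - giambelli σp r l (Xr r fun _ => 0) = 0 := by
      refine Phi_inj_Wsub _ (Submodule.sub_mem _ (eBW r (Delta r l)).2 (hgmem l)) ?_
      rw [map_sub, Phi_eBW, Lmap_apply, hgPhi l, sub_self]
    exact sub_eq_zero.1 h1
end
end
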